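/- arXiv:1604.00524 — 6 statements merged into one kernel-verified Lean document; each statement's English description precedes it below -/
import Mathlib

section
/- Let k be a field of characteristic p > 0, G a finite group, R := k[X]/(X^p), and α : R → kG := MonoidAlgebra k G a k-algebra homomorphism whose image is contained in the k-linear span of an abelian subgroup A of G, and such that kG is flat as a left R-module via r • b := α(r)b. Regard kG as a (kG, R)-bimodule, kG acting by left multiplication and R acting by right multiplication through α. Then for every R-module M there is an isomorphism of kG-modules α_*(M) := kG ⊗_R M ≅ Hom_R(kG, M) =: α_!(M), where kG acts on kG ⊗_R M through left multiplication on the left tensor factor, and acts on the space Hom_R(kG, M) of left R-linear maps by (a • f)(b) = f(b * a). -/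
open TensorProduct

noncomputable section

/-- `R = k[X]/(X^p)`. -/
abbrev Rp (k : Type*) [Field k] (p : ℕ) : Type _ :=
  Polynomial k ⧸ Ideal.span {(Polynomial.X : Polynomial k) ^ p}

section Aux

open Polynomial

variable {k : Type*} [Field k] {p : ℕ} {G : Type*} [Group G]

/-- The trace functional on the group algebra: coefficient of the identity. -/
def trMA (k : Type*) [Field k] (G : Type*) [Group G] : MonoidAlgebra k G →ₗ[k] k :=
  (Finsupp.lapply (1 : G)).comp (MonoidAlgebra.coeffLinearEquiv k).toLinearMap

lemma trMA_apply (x : MonoidAlgebra k G) : trMA k G x = x.coeff 1 := rfl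

lemma trMA_mul_comm (a b : MonoidAlgebra k G) : trMA k G (a * b) = trMA k G (b * a) := by
  classical
  have h : (trMA k G).comp (LinearMap.mulRight k b) = (trMA k G).comp (LinearMap.mulLeft k b) := by
    apply MonoidAlgebra.lhom_ext'
    intro g
    apply LinearMap.ext
    intro c
    show trMA k G (MonoidAlgebra.single g c * b) = trMA k G (b * MonoidAlgebra.single g c)
    rw [trMA_apply, trMA_apply, MonoidAlgebra.single_mul_apply, MonoidAlgebra.mul_single_apply]
    rw [mul_one, one_mul, mul_comm]
  exact LinearMap.congr_fun h a

lemma trMA_nondeg (b : MonoidAlgebra k G) (h : ∀ c, trMA k G (c * b) = 0) : b = 0 := by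
  ext g
  have := h (MonoidAlgebra.single g⁻¹ 1)
  rw [trMA_apply, MonoidAlgebra.single_mul_apply] at this
  simpa using this

end Aux

section RAux

open Polynomial

variable {k : Type*} [Field k] {p : ℕ}

/-- Power basis of `R = k[X]/(X^p)`. -/
def pbR (k : Type*) [Field k] (p : ℕ) : PowerBasis k (Rp k p) :=
  AdjoinRoot.powerBasis' (monic_X_pow p)

/-- The class of `X` in `R`. -/
def tR (k : Type*) [Field k] (p : ℕ) : Rp k p := AdjoinRoot.root (X ^ p)

lemma pbR_dim : (pbR k p).dim = p := by
  simp [pbR, natDegree_X_pow]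

lemma pbR_gen : (pbR k p).gen = tR k p := rfl

lemma tR_pow_self : tR k p ^ p = 0 := by
  show AdjoinRoot.root (X ^ p : k[X]) ^ p = 0
  rw [← AdjoinRoot.mk_X, ← map_pow, AdjoinRoot.mk_self]

lemma tR_pow_eq_zero {m : ℕ} (hm : p ≤ m) : (tR k p) ^ m = 0 := by
  rw [← Nat.sub_add_cancel hm, pow_add, tR_pow_self, mul_zero]

variable (k p) in
/-- The Frobenius functional on `R`: coefficient of `t^(p-1)`. -/
def thR (hp : p ≠ 0) : Rp k p →ₗ[k] k :=
  (pbR k p).basis.coord ⟨p - 1, by rw [pbR_dim]; omega⟩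

variable (hp : p ≠ 0)

lemma thR_pow (m : ℕ) : thR k p hp (tR k p ^ m) = if m = p - 1 then 1 else 0 := by
  by_cases hm : m < p
  · have : tR k p ^ m = (pbR k p).basis ⟨m, by rw [pbR_dim]; omega⟩ := by
      rw [PowerBasis.basis_eq_pow, pbR_gen]
    rw [this, thR, Module.Basis.coord_apply, Module.Basis.repr_self, Finsupp.single_apply]
    by_cases h : m = p - 1
    · rw [if_pos (by simp [Fin.ext_iff, h]), if_pos h]
    · rw [if_neg (by simp [Fin.ext_iff]; omega), if_neg h]
  · rw [tR_pow_eq_zero (by omega), map_zero, if_neg (by omega)]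

lemma thR_nondeg (y : Rp k p) (h : ∀ r, thR k p hp (r * y) = 0) : y = 0 := by
  have hy : ∀ j : Fin (pbR k p).dim, (pbR k p).basis.repr y j = 0 := by
    intro j
    have hjp : (j : ℕ) < p := lt_of_lt_of_eq j.2 pbR_dim
    have hsum := (pbR k p).basis.sum_repr y
    have := h (tR k p ^ (p - 1 - (j : ℕ)))
    rw [← hsum, Finset.mul_sum, map_sum] at this
    have heval : ∀ i : Fin (pbR k p).dim,
        thR k p hp (tR k p ^ (p - 1 - (j : ℕ)) * ((pbR k p).basis.repr y i • (pbR k p).basis i))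
          = if i = j then (pbR k p).basis.repr y i else 0 := by
      intro i
      have hip : (i : ℕ) < p := lt_of_lt_of_eq i.2 pbR_dim
      rw [PowerBasis.basis_eq_pow, pbR_gen, mul_smul_comm, map_smul, ← pow_add, thR_pow hp,
        smul_eq_mul]
      by_cases hij : i = j
      · rw [if_pos hij, if_pos (by subst hij; omega), mul_one]
      · rw [if_neg (by rw [Fin.ext_iff] at hij; omega), if_neg hij, mul_zero]
    rw [Finset.sum_congr rfl (fun i _ => heval i), Finset.sum_ite_eq' _ j,
      if_pos (Finset.mem_univ j)] at this
    exact this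
  have : (pbR k p).basis.repr y = 0 := Finsupp.ext hy
  have h2 := (pbR k p).basis.sum_repr y
  rw [this] at h2
  simpa using h2.symm

end RAux

section PhiSec

open Polynomial

variable {k : Type*} [Field k] {p : ℕ} {G : Type*} [Group G]
variable (hp : p ≠ 0) (α : Rp k p →ₐ[k] MonoidAlgebra k G)

/-- The relative Frobenius homomorphism `φ : kG → R`. -/
def phiMA (x : MonoidAlgebra k G) : Rp k p :=
  ∑ i : Fin p, trMA k G (α (tR k p ^ (p - 1 - (i : ℕ))) * x) • tR k p ^ (i : ℕ)

lemma phiMA_add (x y : MonoidAlgebra k G) : phiMA α (x + y) = phiMA α x + phiMA α y := by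
  simp [phiMA, mul_add, add_smul, Finset.sum_add_distrib]

lemma thR_mul_phi_pow (x : MonoidAlgebra k G) (j : ℕ) (hj : j < p) :
    thR k p hp (tR k p ^ j * phiMA α x) = trMA k G (α (tR k p ^ j) * x) := by
  rw [phiMA, Finset.mul_sum, map_sum]
  have key : ∀ i : Fin p,
      thR k p hp (tR k p ^ j * (trMA k G (α (tR k p ^ (p - 1 - (i : ℕ))) * x) • tR k p ^ (i : ℕ)))
        = if i = (⟨p - 1 - j, by omega⟩ : Fin p) then trMA k G (α (tR k p ^ j) * x) else 0 := by
    intro i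
    rw [mul_smul_comm, map_smul, ← pow_add, thR_pow hp, smul_eq_mul]
    by_cases hij : (i : ℕ) = p - 1 - j
    · have h1 : j + (i : ℕ) = p - 1 := by omega
      have h2 : p - 1 - (i : ℕ) = j := by omega
      rw [h2, if_pos h1, mul_one, if_pos (by simp [Fin.ext_iff, hij])]
    · rw [if_neg (by omega), mul_zero, if_neg (by simp [Fin.ext_iff]; omega)]
  rw [Finset.sum_congr rfl (fun i _ => key i), Finset.sum_ite_eq' Finset.univ _
    (fun _ => trMA k G (α (tR k p ^ j) * x)), if_pos (Finset.mem_univ _)]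

lemma thR_mul_phi (r : Rp k p) (x : MonoidAlgebra k G) :
    thR k p hp (r * phiMA α x) = trMA k G (α r * x) := by
  have h : (thR k p hp).comp (LinearMap.mulRight k (phiMA α x))
      = (trMA k G).comp ((LinearMap.mulRight k x).comp α.toLinearMap) := by
    apply (pbR k p).basis.ext
    intro i
    have hi : (i : ℕ) < p := lt_of_lt_of_eq i.2 pbR_dim
    show thR k p hp ((pbR k p).basis i * phiMA α x) = trMA k G (α ((pbR k p).basis i) * x)
    rw [PowerBasis.basis_eq_pow, pbR_gen]
    exact thR_mul_phi_pow hp α x i hi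
  exact LinearMap.congr_fun h r

lemma phiMA_alpha_left (hp : p ≠ 0) (s : Rp k p) (x : MonoidAlgebra k G) :
    phiMA α (α s * x) = s * phiMA α x := by
  rw [← sub_eq_zero]
  apply thR_nondeg hp
  intro r
  rw [mul_sub, map_sub, thR_mul_phi hp, ← mul_assoc, ← map_mul,
    ← mul_assoc, thR_mul_phi hp, sub_self]

lemma phiMA_alpha_right (hp : p ≠ 0) (s : Rp k p) (x : MonoidAlgebra k G) :
    phiMA α (x * α s) = s * phiMA α x := by
  rw [← sub_eq_zero]
  apply thR_nondeg hp
  intro r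
  rw [mul_sub, map_sub, thR_mul_phi hp, ← mul_assoc, trMA_mul_comm, ← mul_assoc,
    ← map_mul, mul_comm s r, ← mul_assoc, thR_mul_phi hp, sub_self]

lemma trMA_eq_thR_phi (hp : p ≠ 0) (y : MonoidAlgebra k G) : trMA k G y = thR k p hp (phiMA α y) := by
  rw [← one_mul (phiMA α y), thR_mul_phi hp, map_one, one_mul]

end PhiSec

section LocalSec

open Polynomial

variable {k : Type*} [Field k] {p : ℕ}

lemma Rp_span_ne_top (hp : p ≠ 0) :
    (Ideal.span {(X : k[X]) ^ p} : Ideal k[X]) ≠ ⊤ := by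
  rw [Ne, Ideal.span_singleton_eq_top]
  intro h
  have := natDegree_eq_zero_of_isUnit h
  rw [natDegree_X_pow] at this
  exact hp this

lemma Rp_mk_nilpotent (hp : p ≠ 0) {f : k[X]} (hf : f.coeff 0 = 0) :
    (Ideal.Quotient.mk (Ideal.span {(X : k[X]) ^ p}) f) ^ p = 0 := by
  rw [← map_pow, Ideal.Quotient.eq_zero_iff_mem, Ideal.mem_span_singleton]
  exact pow_dvd_pow_of_dvd (Polynomial.X_dvd_iff.mpr hf) p

lemma Rp_isLocalRing (hp : p ≠ 0) : IsLocalRing (Rp k p) := by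
  haveI : Nontrivial (Rp k p) := Ideal.Quotient.nontrivial_iff.mpr (Rp_span_ne_top hp)
  apply IsLocalRing.of_isUnit_or_isUnit_one_sub_self
  intro a
  obtain ⟨f, rfl⟩ := Ideal.Quotient.mk_surjective a
  by_cases hc : f.coeff 0 = 0
  · exact Or.inr (IsNilpotent.isUnit_one_sub ⟨p, Rp_mk_nilpotent hp hc⟩)
  · left
    have hnil : IsNilpotent (Ideal.Quotient.mk _ (f - C (f.coeff 0))) :=
      ⟨p, Rp_mk_nilpotent hp (by simp)⟩
    have hu : IsUnit (Ideal.Quotient.mk (Ideal.span {(X : k[X]) ^ p}) (C (f.coeff 0))) := by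
      refine IsUnit.map _ ?_
      exact (isUnit_C).mpr (isUnit_iff_ne_zero.mpr hc)
    have := hnil.isUnit_add_left_of_commute hu (Commute.all _ _)
    rwa [← map_add, add_sub_cancel] at this
end LocalSec

variable (k : Type*) [Field k] (p : ℕ) (G : Type*) [Group G]

/-- The group algebra `kG` regarded as a left `R`-module via `r • b = α r * b`. -/
def LeftKG (α : Rp k p →ₐ[k] MonoidAlgebra k G) : Type _ := MonoidAlgebra k G

variable {k p G} in
/-- Reinterpret an element of `LeftKG` as an element of the group algebra. -/
def LeftKG.toMA {α : Rp k p →ₐ[k] MonoidAlgebra k G} (b : LeftKG k p G α) :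
    MonoidAlgebra k G := b

variable {k p G} in
/-- Reinterpret an element of the group algebra as an element of `LeftKG`. -/
def LeftKG.ofMA {α : Rp k p →ₐ[k] MonoidAlgebra k G} (b : MonoidAlgebra k G) :
    LeftKG k p G α := b

instance (α : Rp k p →ₐ[k] MonoidAlgebra k G) : AddCommGroup (LeftKG k p G α) :=
  inferInstanceAs (AddCommGroup (MonoidAlgebra k G))

instance (α : Rp k p →ₐ[k] MonoidAlgebra k G) : Module (Rp k p) (LeftKG k p G α) :=
  Module.compHom (MonoidAlgebra k G) α.toRingHom

/-- The group algebra `kG` regarded as a `(kG, R)`-bimodule: `kG` acts by left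
multiplication, and `R` acts (on the right) via `r • b = b * α r`. -/
def RightKG (α : Rp k p →ₐ[k] MonoidAlgebra k G) : Type _ := MonoidAlgebra k G

variable {k p G} in
/-- Reinterpret an element of `RightKG` as an element of the group algebra. -/
def RightKG.toMA {α : Rp k p →ₐ[k] MonoidAlgebra k G} (b : RightKG k p G α) :
    MonoidAlgebra k G := b

instance (α : Rp k p →ₐ[k] MonoidAlgebra k G) : AddCommGroup (RightKG k p G α) :=
  inferInstanceAs (AddCommGroup (MonoidAlgebra k G))

instance (α : Rp k p →ₐ[k] MonoidAlgebra k G) :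
    Module (MonoidAlgebra k G) (RightKG k p G α) :=
  inferInstanceAs (Module (MonoidAlgebra k G) (MonoidAlgebra k G))

instance (α : Rp k p →ₐ[k] MonoidAlgebra k G) : Module (Rp k p) (RightKG k p G α) :=
  Module.compHom (MonoidAlgebra k G)
    (α.toRingHom.toOpposite fun x y => by
      rw [Commute, SemiconjBy, ← map_mul, ← map_mul, mul_comm])

instance (α : Rp k p →ₐ[k] MonoidAlgebra k G) :
    SMulCommClass (Rp k p) (MonoidAlgebra k G) (RightKG k p G α) :=
  ⟨fun r a b => mul_assoc a (RightKG.toMA b) (α r)⟩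

/-- Right multiplication by `a ∈ kG` on `kG`, as a map of left `R`-modules. -/
def rmul (α : Rp k p →ₐ[k] MonoidAlgebra k G) (a : MonoidAlgebra k G) :
    LeftKG k p G α →ₗ[Rp k p] LeftKG k p G α where
  toFun b := LeftKG.ofMA (b.toMA * a)
  map_add' x y := add_mul x.toMA y.toMA a
  map_smul' r b := mul_assoc (α r) b.toMA a

/-- `kG` acts on the left `R`-linear maps `Hom_R(kG, M)` by `(a • f)(b) = f (b * a)`. -/
instance (α : Rp k p →ₐ[k] MonoidAlgebra k G) (M : Type*) [AddCommGroup M]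
    [Module (Rp k p) M] :
    Module (MonoidAlgebra k G) (LeftKG k p G α →ₗ[Rp k p] M) where
  smul a f := f.comp (rmul k p G α a)
  one_smul f := by
    ext b
    show f (LeftKG.ofMA (b.toMA * 1)) = f b
    rw [mul_one]
    rfl
  mul_smul a a' f := by
    ext b
    show f (LeftKG.ofMA (b.toMA * (a * a')))
      = f (LeftKG.ofMA ((LeftKG.ofMA (b.toMA * a) : LeftKG k p G α).toMA * a'))
    rw [show (LeftKG.ofMA (b.toMA * a) : LeftKG k p G α).toMA = b.toMA * a from rfl,
      mul_assoc]
  smul_zero a := rfl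
  smul_add a f g := rfl
  add_smul a a' f := by
    ext b
    show f (LeftKG.ofMA (b.toMA * (a + a')))
      = f (LeftKG.ofMA (b.toMA * a)) + f (LeftKG.ofMA (b.toMA * a'))
    rw [show (LeftKG.ofMA (b.toMA * (a + a')) : LeftKG k p G α)
        = LeftKG.ofMA (b.toMA * a) + LeftKG.ofMA (b.toMA * a') by
          show b.toMA * (a + a') = b.toMA * a + b.toMA * a'
          rw [mul_add],
      map_add]
  zero_smul f := by
    ext b
    show f (LeftKG.ofMA (b.toMA * 0)) = 0
    rw [show (LeftKG.ofMA (b.toMA * 0) : LeftKG k p G α) = 0 by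
        show b.toMA * 0 = 0; rw [mul_zero]]
    exact map_zero f


section MainAux

set_option synthInstance.maxHeartbeats 1000000
set_option maxHeartbeats 2000000

open Polynomial Module

variable {k : Type*} [Field k] {p : ℕ} {G : Type*} [Group G]

instance instModKL (α : Rp k p →ₐ[k] MonoidAlgebra k G) : Module k (LeftKG k p G α) :=
  inferInstanceAs (Module k (MonoidAlgebra k G))

instance instTowerL (α : Rp k p →ₐ[k] MonoidAlgebra k G) :
    IsScalarTower k (Rp k p) (LeftKG k p G α) :=
  ⟨fun c r b => show α (c • r) * LeftKG.toMA b = c • (α r * LeftKG.toMA b) by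
    rw [map_smul, smul_mul_assoc]⟩

instance instModKR (α : Rp k p →ₐ[k] MonoidAlgebra k G) : Module k (RightKG k p G α) :=
  inferInstanceAs (Module k (MonoidAlgebra k G))

instance instTowerR (α : Rp k p →ₐ[k] MonoidAlgebra k G) :
    IsScalarTower k (Rp k p) (RightKG k p G α) :=
  ⟨fun c r b => show RightKG.toMA b * α (c • r) = c • (RightKG.toMA b * α r) by
    rw [map_smul, mul_smul_comm]⟩

instance instFinMA [Finite G] : Module.Finite k (MonoidAlgebra k G) :=
  Module.Finite.equiv (MonoidAlgebra.coeffLinearEquiv k).symm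

/-- The map `Θ : kG → Hom_R(kG, R)`, `b ↦ (c ↦ φ(c b))`, as a map of `(kG,R)`-bimodules. -/
noncomputable def Theta (hp : p ≠ 0) (α : Rp k p →ₐ[k] MonoidAlgebra k G) :
    RightKG k p G α →ₗ[Rp k p] Module.Dual (Rp k p) (LeftKG k p G α) where
  toFun b :=
    { toFun := fun c => phiMA α (LeftKG.toMA c * RightKG.toMA b)
      map_add' := fun c c' => by
        show phiMA α ((LeftKG.toMA c + LeftKG.toMA c') * RightKG.toMA b) = _
        rw [add_mul, phiMA_add]
      map_smul' := fun r c => by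
        show phiMA α ((α r * LeftKG.toMA c) * RightKG.toMA b)
          = r • phiMA α (LeftKG.toMA c * RightKG.toMA b)
        rw [mul_assoc, phiMA_alpha_left α hp, smul_eq_mul] }
  map_add' b b' := LinearMap.ext fun c => by
    show phiMA α (LeftKG.toMA c * (RightKG.toMA b + RightKG.toMA b'))
      = phiMA α (LeftKG.toMA c * RightKG.toMA b) + phiMA α (LeftKG.toMA c * RightKG.toMA b')
    rw [mul_add, phiMA_add]
  map_smul' r b := LinearMap.ext fun c => by
    show phiMA α (LeftKG.toMA c * (RightKG.toMA b * α r))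
      = r • phiMA α (LeftKG.toMA c * RightKG.toMA b)
    rw [← mul_assoc, phiMA_alpha_right α hp, smul_eq_mul]

lemma Theta_apply (hp : p ≠ 0) (α : Rp k p →ₐ[k] MonoidAlgebra k G)
    (b : RightKG k p G α) (c : LeftKG k p G α) :
    Theta hp α b c = phiMA α (LeftKG.toMA c * RightKG.toMA b) := rfl

lemma Theta_bijective (hp : p ≠ 0) (α : Rp k p →ₐ[k] MonoidAlgebra k G) [Fintype G]
    [Module.Free (Rp k p) (LeftKG k p G α)] [Module.Finite (Rp k p) (LeftKG k p G α)] :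
    Function.Bijective (Theta hp α) := by
  classical
  haveI : Nontrivial (Rp k p) := Ideal.Quotient.nontrivial_iff.mpr (Rp_span_ne_top hp)
  have hinj : Function.Injective (Theta hp α) := by
    rw [injective_iff_map_eq_zero]
    intro b hb
    have h1 : ∀ c : MonoidAlgebra k G, trMA k G (c * RightKG.toMA b) = 0 := by
      intro c
      have h2 : phiMA α (c * RightKG.toMA b) = 0 := LinearMap.congr_fun hb (LeftKG.ofMA c)
      rw [trMA_eq_thR_phi α hp, h2, map_zero]
    exact trMA_nondeg _ h1
  refine ⟨hinj, ?_⟩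
  set B := Module.Free.chooseBasis (Rp k p) (LeftKG k p G α) with hB
  let eD : Module.Dual (Rp k p) (LeftKG k p G α) ≃ₗ[Rp k p] LeftKG k p G α :=
    B.dualBasis.equiv B (Equiv.refl _)
  let eDk := eD.restrictScalars k
  haveI : Module.Finite k (LeftKG k p G α) :=
    inferInstanceAs (Module.Finite k (MonoidAlgebra k G))
  haveI : Module.Finite k (RightKG k p G α) :=
    inferInstanceAs (Module.Finite k (MonoidAlgebra k G))
  haveI : Module.Finite k (Module.Dual (Rp k p) (LeftKG k p G α)) :=
    Module.Finite.equiv eDk.symm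
  have hr : LinearMap.range ((Theta hp α).restrictScalars k) = ⊤ := by
    apply Submodule.eq_top_of_finrank_eq
    rw [LinearMap.finrank_range_of_inj (show Function.Injective ((Theta hp α).restrictScalars k) from hinj)]
    have e1 : Module.finrank k (Module.Dual (Rp k p) (LeftKG k p G α))
        = Module.finrank k (LeftKG k p G α) := eDk.finrank_eq
    have e2 : Module.finrank k (RightKG k p G α) = Module.finrank k (LeftKG k p G α) :=
      LinearEquiv.finrank_eq
        (show RightKG k p G α ≃ₗ[k] LeftKG k p G α from LinearEquiv.refl k (MonoidAlgebra k G))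
    rw [e1, e2]
  intro d
  obtain ⟨b, hb⟩ := LinearMap.range_eq_top.mp hr d
  exact ⟨b, hb⟩

/-- The natural isomorphism `kG ⊗_R M ≃ Hom_R(kG, M)` as `R`-modules. -/
noncomputable def e0 (hp : p ≠ 0) (α : Rp k p →ₐ[k] MonoidAlgebra k G) [Fintype G]
    [Module.Free (Rp k p) (LeftKG k p G α)] [Module.Finite (Rp k p) (LeftKG k p G α)]
    (M : Type*) [AddCommGroup M] [Module (Rp k p) M] :
    (RightKG k p G α ⊗[Rp k p] M) ≃ₗ[Rp k p] (LeftKG k p G α →ₗ[Rp k p] M) :=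
  (TensorProduct.congr (LinearEquiv.ofBijective _ (Theta_bijective hp α))
    (LinearEquiv.refl _ M)).trans (dualTensorHomEquiv _ _ _)

lemma e0_tmul (hp : p ≠ 0) (α : Rp k p →ₐ[k] MonoidAlgebra k G) [Fintype G]
    [Module.Free (Rp k p) (LeftKG k p G α)] [Module.Finite (Rp k p) (LeftKG k p G α)]
    (M : Type*) [AddCommGroup M] [Module (Rp k p) M]
    (b : RightKG k p G α) (m : M) (c : LeftKG k p G α) :
    e0 hp α M (b ⊗ₜ m) c = phiMA α (LeftKG.toMA c * RightKG.toMA b) • m := by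
  simp only [e0, LinearEquiv.trans_apply, TensorProduct.congr_tmul, LinearEquiv.refl_apply,
    LinearEquiv.ofBijective_apply, dualTensorHomEquiv, dualTensorHomEquivOfBasis_apply,
    dualTensorHom_apply, Theta_apply]

lemma e0_smul (hp : p ≠ 0) (α : Rp k p →ₐ[k] MonoidAlgebra k G) [Fintype G]
    [Module.Free (Rp k p) (LeftKG k p G α)] [Module.Finite (Rp k p) (LeftKG k p G α)]
    (M : Type*) [AddCommGroup M] [Module (Rp k p) M]
    (a : MonoidAlgebra k G) (x : RightKG k p G α ⊗[Rp k p] M) :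
    e0 hp α M (a • x) = a • e0 hp α M x := by
  induction x with
  | zero => rw [smul_zero, map_zero, smul_zero]
  | add x y hx hy => rw [smul_add, map_add, map_add, smul_add, hx, hy]
  | tmul b m =>
    rw [TensorProduct.smul_tmul']
    refine LinearMap.ext fun c => ?_
    calc e0 hp α M ((a • b) ⊗ₜ m) c
        = phiMA α (LeftKG.toMA c * (a * RightKG.toMA b)) • m := e0_tmul hp α M _ m c
      _ = phiMA α ((LeftKG.toMA c * a) * RightKG.toMA b) • m := by rw [mul_assoc]
      _ = (a • e0 hp α M (b ⊗ₜ m)) c :=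
          (e0_tmul hp α M b m (LeftKG.ofMA (LeftKG.toMA c * a))).symm

end MainAux

/-- For a π-point `α : k[X]/(X^p) → kG` of a finite group `G` (a `k`-algebra map whose
image lies in the `k`-linear span of an abelian subgroup `A ≤ G`, such that `kG` is flat
as a left `R`-module via `r • b = α r * b`) and any `R`-module `M`, there is an
isomorphism of `kG`-modules `α_*(M) = kG ⊗_R M ≅ Hom_R(kG, M) = α_!(M)`, where `kG` acts
on the tensor product by left multiplication on the left factor and on `Hom_R(kG, M)` by
`(a • f)(b) = f (b * a)`. -/
theorem stmt0 [Fintype G] [Fact p.Prime] [CharP k p]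
    (α : Rp k p →ₐ[k] MonoidAlgebra k G)
    (A : Subgroup G) (hA : ∀ x y : A, x * y = y * x)
    (hrange : ∀ r, α r ∈ Submodule.span k
      (Set.range fun a : A => MonoidAlgebra.of k G (a : G)))
    (hflat : Module.Flat (Rp k p) (LeftKG k p G α))
    (M : Type*) [AddCommGroup M] [Module (Rp k p) M] :
    Nonempty ((RightKG k p G α ⊗[Rp k p] M) ≃ₗ[MonoidAlgebra k G]
      (LeftKG k p G α →ₗ[Rp k p] M)) := by
  have hp : p ≠ 0 := (Fact.out : p.Prime).ne_zero
  haveI : IsLocalRing (Rp k p) := Rp_isLocalRing hp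
  haveI := hflat
  haveI : Module.Finite k (LeftKG k p G α) :=
    inferInstanceAs (Module.Finite k (MonoidAlgebra k G))
  haveI : Module.Finite (Rp k p) (LeftKG k p G α) :=
    Module.Finite.of_restrictScalars_finite k _ _
  haveI : Module.FinitePresentation (Rp k p) (LeftKG k p G α) :=
    Module.finitePresentation_of_finite _ _
  haveI : Module.Free (Rp k p) (LeftKG k p G α) := Module.free_of_flat_of_isLocalRing
  exact ⟨{ toFun := e0 hp α M
           invFun := (e0 hp α M).symm
           left_inv := (e0 hp α M).left_inv
           right_inv := (e0 hp α M).right_inv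
           map_add' := (e0 hp α M).map_add
           map_smul' := e0_smul hp α M }⟩
end
end

section
/- Let k be a field of characteristic p > 0, G a finite group, R := k[X]/(X^p), and α : R → kG := MonoidAlgebra k G any k-algebra homomorphism. Regard kG as a left R-module via r • b := α(r)b. Then the left kG-module Hom_R(kG, R) of left R-linear maps f : kG → R, with kG acting by (a • f)(b) = f(b * a), is isomorphic to kG with its left regular action. -/
open TensorProduct

noncomputable section

variable (k : Type*) [Field k] (p : ℕ) (G : Type*) [Group G]

namespace Stmt2Aux
set_option synthInstance.maxHeartbeats 1000000
set_option maxHeartbeats 1000000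

open Polynomial
open Module

variable (k : Type*) [Field k] (p : ℕ)

/-- The image of `X` in `R = k[X]/(X^p)`. -/
def xR : Rp k p := AdjoinRoot.root (X ^ p)

theorem xR_pow_p : (xR k p) ^ p = 0 := by
  have : (AdjoinRoot.mk (X ^ p : Polynomial k)) (X ^ p) = 0 := AdjoinRoot.mk_self
  rw [map_pow, AdjoinRoot.mk_X] at this
  exact this

theorem xR_pow_eq_zero {m : ℕ} (hm : p ≤ m) : (xR k p) ^ m = 0 := by
  calc (xR k p)^m = (xR k p)^p * (xR k p)^(m-p) := by rw [← pow_add]; congr 1; omega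
  _ = 0 := by rw [xR_pow_p, zero_mul]

/-- Power basis for `R`. -/
def pb : PowerBasis k (Rp k p) := AdjoinRoot.powerBasis' (monic_X_pow p)

theorem pb_dim : (pb k p).dim = p := by simp [pb]

/-- The basis `1, x, …, x^(p-1)` of `R`, indexed by `Fin p`. -/
def Bb : Basis (Fin p) k (Rp k p) :=
  (pb k p).basis.reindex (finCongr (pb_dim k p))

theorem Bb_apply (i : Fin p) : Bb k p i = (xR k p) ^ (i : ℕ) := by
  rw [Bb, Basis.reindex_apply, (pb k p).basis_eq_pow]
  congr 1

variable (hp : 0 < p)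

include hp in
/-- The coefficient of `x^(p-1)`. -/
def lam : Rp k p →ₗ[k] k := (Bb k p).coord ⟨p-1, by omega⟩

theorem lam_pow (m : ℕ) : lam k p hp ((xR k p) ^ m) = if m = p - 1 then 1 else 0 := by
  by_cases hm : m < p
  · rw [← Bb_apply k p ⟨m, hm⟩, lam, Basis.coord_apply, Basis.repr_self,
      Finsupp.single_apply]
    simp [Fin.ext_iff]
  · rw [xR_pow_eq_zero k p (by omega), map_zero, if_neg (by omega)]

theorem lam_key (j : ℕ) (hj : j < p) (r : Rp k p) :
    lam k p hp ((xR k p) ^ j * r) = (Bb k p).repr r ⟨p - 1 - j, by omega⟩ := by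
  have : (lam k p hp).comp (LinearMap.mulLeft k ((xR k p) ^ j))
      = (Bb k p).coord ⟨p - 1 - j, by omega⟩ := by
    apply Basis.ext (Bb k p)
    intro i
    simp only [LinearMap.comp_apply, LinearMap.mulLeft_apply, Basis.coord_apply,
      Basis.repr_self, Finsupp.single_apply]
    rw [Bb_apply, ← pow_add, lam_pow]
    have := i.isLt
    simp only [Fin.ext_iff]
    split_ifs <;> first | rfl | omega
  calc lam k p hp ((xR k p) ^ j * r)
      = ((lam k p hp).comp (LinearMap.mulLeft k ((xR k p) ^ j))) r := rfl
    _ = (Bb k p).coord ⟨p - 1 - j, by omega⟩ r := by rw [this]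
    _ = _ := rfl

theorem lam_sep (r s : Rp k p)
    (h : ∀ j : Fin p, lam k p hp ((xR k p) ^ (j:ℕ) * r) = lam k p hp ((xR k p) ^ (j:ℕ) * s)) :
    r = s := by
  have : (Bb k p).repr r = (Bb k p).repr s := by
    ext i
    have hi := i.isLt
    have h1 := lam_key k p hp (p - 1 - i) (by omega) r
    have h2 := lam_key k p hp (p - 1 - i) (by omega) s
    have hii : (⟨p - 1 - (p - 1 - (i:ℕ)), by omega⟩ : Fin p) = i := by
      rw [Fin.ext_iff]; simp; omega
    rw [hii] at h1 h2
    rw [← h1, ← h2]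
    exact h ⟨p - 1 - i, by omega⟩
  exact (Bb k p).repr.injective this

/-- The key reindexing identity for sums of the shape appearing in `T`. -/
theorem sums_eq (m : ℕ) (hm : m < p) (F : ℕ → k) (hF : ∀ i, p ≤ i → F i = 0) :
    ∑ j ∈ Finset.range p, F (j + m) • (xR k p) ^ (p - 1 - j)
      = ∑ j ∈ Finset.range p, F j • (xR k p) ^ (m + (p - 1 - j)) := by
  have hL : ∑ j ∈ Finset.range p, F (j + m) • (xR k p) ^ (p - 1 - j)
      = ∑ j ∈ Finset.range (p - m), F (j + m) • (xR k p) ^ (p - 1 - j) := by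
    refine (Finset.sum_subset ?_ ?_).symm
    · apply Finset.range_subset_range.2; omega
    · intro j hj hj'
      simp only [Finset.mem_range] at hj hj'
      rw [hF (j + m) (by omega), zero_smul]
  have hR : ∑ j ∈ Finset.range p, F j • (xR k p) ^ (m + (p - 1 - j))
      = ∑ j ∈ Finset.Ico m p, F j • (xR k p) ^ (m + (p - 1 - j)) := by
    refine (Finset.sum_subset ?_ ?_).symm
    · intro j hj; simp only [Finset.mem_Ico] at hj; simp only [Finset.mem_range]; omega
    · intro j hj hj'
      simp only [Finset.mem_range, Finset.mem_Ico, not_and, not_le] at hj hj'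
      rw [xR_pow_eq_zero k p (by omega), smul_zero]
  rw [hL, hR, Finset.sum_Ico_eq_sum_range]
  apply Finset.sum_congr (by congr 1)
  intro j hj
  simp only [Finset.mem_range] at hj
  congr 2
  · omega
  · omega

variable {G : Type*} [Group G] (α : Rp k p →ₐ[k] MonoidAlgebra k G)

/-- Evaluation at the identity of `G`. -/
def lamG : MonoidAlgebra k G →ₗ[k] k :=
  (Finsupp.lapply (1 : G)).comp (MonoidAlgebra.coeffLinearEquiv k).toLinearMap

theorem lamG_apply (c : MonoidAlgebra k G) : lamG k (G := G) c = c.coeff 1 := rfl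

theorem lamG_sep (a : MonoidAlgebra k G)
    (h : ∀ b : MonoidAlgebra k G, lamG k (G := G) (b * a) = 0) : a = 0 := by
  ext g
  have := h (MonoidAlgebra.single g⁻¹ 1)
  rw [lamG_apply, MonoidAlgebra.coeff_single_mul_apply] at this
  simpa using this

/-- The map `c ↦ ∑_j λG(α(x^j) c) x^(p-1-j)` from `kG` to `R`. -/
def T : MonoidAlgebra k G →ₗ[k] Rp k p :=
  ∑ j ∈ Finset.range p,
    (LinearMap.toSpanSingleton k (Rp k p) ((xR k p) ^ (p - 1 - j))).comp
      ((lamG k).comp (LinearMap.mulLeft k (α ((xR k p) ^ j))))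

theorem T_apply (c : MonoidAlgebra k G) :
    T k p α c = ∑ j ∈ Finset.range p,
      lamG k (α ((xR k p) ^ j) * c) • (xR k p) ^ (p - 1 - j) := by
  simp [T, LinearMap.sum_apply, LinearMap.toSpanSingleton_apply]

theorem lam_T (c : MonoidAlgebra k G) : lam k p hp (T k p α c) = lamG k c := by
  rw [T_apply, map_sum]
  rw [Finset.sum_eq_single 0]
  · rw [map_smul, lam_pow]
    simp
  · intro j hj hj0
    simp only [Finset.mem_range] at hj
    rw [map_smul, lam_pow, if_neg (by omega), smul_eq_mul, mul_zero]
  · intro h; exact absurd (Finset.mem_range.2 hp) h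

set_option maxHeartbeats 1000000 in
theorem T_mul (r : Rp k p) (c : MonoidAlgebra k G) :
    T k p α (α r * c) = r * T k p α c := by
  have key : ∀ m : ℕ, m < p → T k p α (α ((xR k p) ^ m) * c)
      = (xR k p) ^ m * T k p α c := by
    intro m hm
    rw [T_apply, T_apply, Finset.mul_sum]
    have : ∀ j ∈ Finset.range p,
        lamG k (α ((xR k p) ^ j) * (α ((xR k p) ^ m) * c)) • (xR k p) ^ (p - 1 - j)
          = lamG k (α ((xR k p) ^ (j + m)) * c) • (xR k p) ^ (p - 1 - j) := by
      intro j _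
      rw [← mul_assoc, ← map_mul, ← pow_add]
    rw [Finset.sum_congr rfl this]
    have : ∀ j ∈ Finset.range p,
        (xR k p) ^ m * (lamG k (α ((xR k p) ^ j) * c) • (xR k p) ^ (p - 1 - j))
          = lamG k (α ((xR k p) ^ j) * c) • (xR k p) ^ (m + (p - 1 - j)) := by
      intro j _
      rw [mul_smul_comm, ← pow_add]
    rw [Finset.sum_congr rfl this]
    exact sums_eq k p m hm (fun i => lamG k (α ((xR k p) ^ i) * c))
      (fun i hi => by simp [xR_pow_eq_zero k p hi])
  have main : (T k p α).comp ((LinearMap.mulRight k c).comp α.toLinearMap)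
      = LinearMap.mulRight k (T k p α c) := by
    apply Basis.ext (Bb k p)
    intro i
    have hi := i.isLt
    simp only [LinearMap.comp_apply, AlgHom.toLinearMap_apply,
      LinearMap.mulRight_apply, Bb_apply]
    rw [key (i : ℕ) hi]
  have := congrArg (fun (L : Rp k p →ₗ[k] Rp k p) => L r) main
  simpa using this

/-- The candidate image of `a` under the isomorphism: `b ↦ ∑_j λG(α(x^j) b a) x^(p-1-j)`,
as an `R`-linear map. -/
def Phi (a : MonoidAlgebra k G) : LeftKG k p G α →ₗ[Rp k p] Rp k p where
  toFun b := T k p α (b.toMA * a)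
  map_add' x y := by
    show T k p α ((x.toMA + y.toMA) * a) = T k p α (x.toMA * a) + T k p α (y.toMA * a)
    rw [add_mul, map_add]
  map_smul' r b := by
    show T k p α ((α r * b.toMA) * a) = r * T k p α (b.toMA * a)
    rw [mul_assoc, T_mul k p α r (b.toMA * a)]

theorem Phi_apply (a : MonoidAlgebra k G) (b : LeftKG k p G α) :
    Phi k p α a b = T k p α (b.toMA * a) := rfl

/-- `Phi` bundled as a `kG`-linear map. -/
def PhiL : MonoidAlgebra k G →ₗ[MonoidAlgebra k G]
    (LeftKG k p G α →ₗ[Rp k p] Rp k p) where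
  toFun := Phi k p α
  map_add' a a' := by
    apply LinearMap.ext; intro b
    show T k p α (b.toMA * (a + a')) = T k p α (b.toMA * a) + T k p α (b.toMA * a')
    rw [mul_add, map_add]
  map_smul' a a' := by
    apply LinearMap.ext; intro b
    show T k p α (b.toMA * (a * a'))
      = T k p α ((LeftKG.ofMA (b.toMA * a) : LeftKG k p G α).toMA * a')
    rw [show (LeftKG.ofMA (b.toMA * a) : LeftKG k p G α).toMA = b.toMA * a from rfl,
      mul_assoc]

include hp in
theorem PhiL_inj : Function.Injective (PhiL k p α) := by
  intro a a' h
  rw [← sub_eq_zero]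
  apply lamG_sep k
  intro b
  have h0 : Phi k p α (a - a') = 0 := by
    have : PhiL k p α (a - a') = 0 := by rw [map_sub, h, sub_self]
    exact this
  have := congrArg (fun (L : LeftKG k p G α →ₗ[Rp k p] Rp k p) => L (LeftKG.ofMA b)) h0
  simp only [Phi_apply, LinearMap.zero_apply] at this
  rw [← lam_T k p hp α (b * (a - a'))]
  rw [show (LeftKG.ofMA b : LeftKG k p G α).toMA = b from rfl] at this
  rw [this, map_zero]

include hp in
theorem PhiL_surj [Fintype G] : Function.Surjective (PhiL k p α) := by
  intro f
  classical
  let g : MonoidAlgebra k G →ₗ[k] k :=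
    { toFun := fun b => lam k p hp (f (LeftKG.ofMA b))
      map_add' := fun x y => by
        show lam k p hp (f ((LeftKG.ofMA x : LeftKG k p G α) + (LeftKG.ofMA y : LeftKG k p G α)))
          = lam k p hp (f (LeftKG.ofMA x)) + lam k p hp (f (LeftKG.ofMA y))
        rw [map_add, map_add]
      map_smul' := fun c b => by
        have h1 : (LeftKG.ofMA (c • b) : LeftKG k p G α)
            = (algebraMap k (Rp k p) c) • LeftKG.ofMA b := by
          show c • b = α (algebraMap k (Rp k p) c) * b
          rw [AlgHom.commutes, ← Algebra.smul_def]
        show lam k p hp (f (LeftKG.ofMA (c • b))) = c * lam k p hp (f (LeftKG.ofMA b))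
        rw [h1, map_smul]
        show lam k p hp (algebraMap k (Rp k p) c • f (LeftKG.ofMA b)) = _
        rw [algebraMap_smul, map_smul, smul_eq_mul] }
  refine ⟨∑ x : G, MonoidAlgebra.single x (g (MonoidAlgebra.single x⁻¹ 1)), ?_⟩
  set a : MonoidAlgebra k G := ∑ x : G, MonoidAlgebra.single x (g (MonoidAlgebra.single x⁻¹ 1))
    with ha
  have claim1 : ∀ b : MonoidAlgebra k G, lamG k (G := G) (b * a) = g b := by
    intro b
    rw [ha, Finset.mul_sum, map_sum]
    have e1 : ∀ x : G, lamG k (G := G)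
        (b * MonoidAlgebra.single x (g (MonoidAlgebra.single x⁻¹ 1)))
        = b.coeff x⁻¹ * g (MonoidAlgebra.single x⁻¹ 1) := by
      intro x
      rw [lamG_apply, MonoidAlgebra.coeff_mul_single_apply, one_mul]
    rw [Finset.sum_congr rfl (fun x _ => e1 x)]
    rw [show (∑ x : G, b.coeff x⁻¹ * g (MonoidAlgebra.single x⁻¹ 1))
        = ∑ x : G, b.coeff x * g (MonoidAlgebra.single x 1) from
      Fintype.sum_equiv (Equiv.inv G) _ _ (fun x => by simp)]
    conv_rhs => rw [← MonoidAlgebra.sum_coeff_single b, Finsupp.sum_fintype _ _ (by simp), map_sum]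
    apply Finset.sum_congr rfl
    intro x _
    have e2 : (MonoidAlgebra.single x (b.coeff x) : MonoidAlgebra k G)
        = (b.coeff x) • (MonoidAlgebra.single x (1:k) : MonoidAlgebra k G) := by
      rw [MonoidAlgebra.smul_single', mul_one]
    rw [e2, map_smul, smul_eq_mul]
  show Phi k p α a = f
  apply LinearMap.ext
  intro b
  apply lam_sep k p hp
  intro j
  have hjb : (xR k p) ^ (j:ℕ) * Phi k p α a b
      = Phi k p α a (((xR k p) ^ (j:ℕ)) • b) := by
    rw [Phi_apply, Phi_apply, ← T_mul k p α]
    congr 1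
    rw [show ((((xR k p) ^ (j:ℕ)) • b : LeftKG k p G α)).toMA
      = α ((xR k p) ^ (j:ℕ)) * b.toMA from rfl, mul_assoc]
  rw [hjb, Phi_apply, lam_T k p hp α, claim1]
  show lam k p hp (f (LeftKG.ofMA ((((xR k p) ^ (j:ℕ)) • b : LeftKG k p G α).toMA)))
    = lam k p hp ((xR k p) ^ (j:ℕ) * f b)
  rw [show (LeftKG.ofMA ((((xR k p) ^ (j:ℕ)) • b : LeftKG k p G α).toMA))
      = ((xR k p) ^ (j:ℕ)) • b from rfl, map_smul]
  rfl

end Stmt2Aux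
set_option synthInstance.maxHeartbeats 1000000 in
/-- For a finite group `G` over a field `k` of characteristic `p > 0` and any
`k`-algebra homomorphism `α : R = k[X]/(X^p) → kG`, the left `kG`-module
`Hom_R(kG, R)` of left `R`-linear maps (with `kG` acting by `(a • f)(b) = f (b * a)`
and `R` acting on `kG` by `r • b = α r * b`) is isomorphic to `kG` with its left
regular action. -/
theorem stmt2 [Fintype G] [Fact p.Prime] [CharP k p]
    (α : Rp k p →ₐ[k] MonoidAlgebra k G) :
    Nonempty ((LeftKG k p G α →ₗ[Rp k p] Rp k p) ≃ₗ[MonoidAlgebra k G]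
      MonoidAlgebra k G) := by
  have hp : 0 < p := (Fact.out : p.Prime).pos
  exact ⟨(LinearEquiv.ofBijective (Stmt2Aux.PhiL k p α)
    ⟨Stmt2Aux.PhiL_inj k p hp α, Stmt2Aux.PhiL_surj k p hp α⟩).symm⟩
end
end

section
/- Let A be a ring and M an endofinite A-module. Then there exists a family (M_i)_{i ∈ ι} of A-submodules of M such that M is the internal direct sum of the M_i (the family of submodules is independent and its supremum is all of M) and each M_i is a nonzero indecomposable A-module (necessarily itself endofinite). -/
/-- An `A`-module `M` is *endofinite* if it has finite length as a module over its
endomorphism ring `Module.End A M`, which acts on `M` by evaluation `f • m = f m`. -/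
def IsEndofinite (A M : Type*) [Ring A] [AddCommGroup M] [Module A M] : Prop :=
  IsFiniteLength (Module.End A M) M

set_option maxHeartbeats 1000000

section Coset

/-- L0: a directed family of nonempty cosets of submodules of an Artinian module has a
common point. -/
lemma coset_directed_nonempty {R S : Type} [Ring R] [AddCommGroup S] [Module R S]
    [IsArtinian R S] {κ : Type} [Nonempty κ]
    (V : κ → Set S) (W : κ → Submodule R S)
    (hcoset : ∀ k, ∃ c, V k = {x | x - c ∈ W k})
    (hdir : ∀ k l, ∃ j, V j ⊆ V k ∧ V j ⊆ V l) :
    ∃ s, ∀ k, s ∈ V k := by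
  classical
  have hne : ∀ k, (V k).Nonempty := by
    intro k
    obtain ⟨c, hc⟩ := hcoset k
    exact ⟨c, by simp [hc]⟩
  -- subgroup monotonicity along coset inclusion
  have hWmono : ∀ {j k : κ}, V j ⊆ V k → W j ≤ W k := by
    intro j k hjk
    obtain ⟨c, hc⟩ := hcoset j
    obtain ⟨c', hc'⟩ := hcoset k
    intro w hw
    have h1 : c + w ∈ V k := hjk (by simp [hc, hw])
    have h2 : c ∈ V k := hjk (by simp [hc])
    rw [hc', Set.mem_setOf_eq] at h1 h2
    have h3 : (c + w - c') - (c - c') ∈ W k := sub_mem h1 h2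
    simpa using h3
  have wf : WellFounded ((· < ·) : Submodule R S → Submodule R S → Prop) :=
    (inferInstance : WellFoundedLT (Submodule R S)).wf
  obtain ⟨Wm, ⟨k₀, hk₀⟩, hmin⟩ := wf.has_min (Set.range W) ⟨W (Classical.arbitrary κ), Set.mem_range_self _⟩
  obtain ⟨c₀, hc₀⟩ := hcoset k₀
  refine ⟨c₀, fun k => ?_⟩
  obtain ⟨j, hj₀, hjk⟩ := hdir k₀ k
  have hWle : W j ≤ W k₀ := hWmono hj₀
  have hWeq : W j = W k₀ := by
    rcases lt_or_eq_of_le hWle with h | h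
    · exact absurd (hk₀ ▸ h) (hmin (W j) (Set.mem_range_self j))
    · exact h
  -- V k₀ ⊆ V j
  obtain ⟨cj, hcj⟩ := hcoset j
  have hcjVk₀ : cj ∈ V k₀ := hj₀ (by simp [hcj])
  have hsub : V k₀ ⊆ V j := by
    intro x hx
    rw [hc₀, Set.mem_setOf_eq] at hx hcjVk₀
    rw [hcj, Set.mem_setOf_eq, hWeq]
    have hxe : x - cj = (x - c₀) - (cj - c₀) := (sub_sub_sub_cancel_right x cj c₀).symm
    rw [hxe]
    exact sub_mem hx hcjVk₀
  exact hjk (hsub (by simp [hc₀]))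

end Coset

section Compactness

variable {A : Type} [Ring A] {M T : Type} [AddCommGroup M] [Module A M]
  [AddCommGroup T] [Module A T]

/-- Helper: a finite subset of the union of a nonempty chain of sets lies in one member. -/
lemma chain_finset_subset {α : Type} {c : Set (Set α)} (hc : IsChain (· ⊆ ·) c)
    (hne : c.Nonempty) (Q : Finset α) (hQ : ↑Q ⊆ ⋃₀ c) : ∃ P ∈ c, ↑Q ⊆ P := by
  classical
  induction Q using Finset.induction with
  | empty => exact ⟨hne.choose, hne.choose_spec, by simp⟩
  | @insert a Q ha ih =>
    have hQ' : ↑Q ⊆ ⋃₀ c := by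
      refine Set.Subset.trans ?_ hQ
      intro z hz; simp only [Finset.coe_insert, Set.mem_insert_iff]; exact Or.inr hz
    obtain ⟨P1, hP1, hP1Q⟩ := ih hQ'
    have haU : a ∈ ⋃₀ c := hQ (by simp)
    obtain ⟨P2, hP2, haP2⟩ := haU
    rcases hc.total hP1 hP2 with h | h
    · exact ⟨P2, hP2, by
        intro z hz
        simp only [Finset.coe_insert, Set.mem_insert_iff] at hz
        rcases hz with rfl | hz
        · exact haP2
        · exact h (hP1Q hz)⟩
    · exact ⟨P1, hP1, by
        intro z hz
        simp only [Finset.coe_insert, Set.mem_insert_iff] at hz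
        rcases hz with rfl | hz
        · exact h haP2
        · exact hP1Q hz⟩

/-- L1: solvability of a directed family of linear constraints with values in a module `T`
that is Artinian over its endomorphism ring. -/
lemma exists_hom_of_directed_constraints [IsArtinian (Module.End A T) T]
    {ι : Type} [Nonempty ι] {Z : ι → Type} [∀ i, AddCommGroup (Z i)] [∀ i, Module A (Z i)]
    (u : ∀ i, Z i →ₗ[A] M) (v : ∀ i, Z i →ₗ[A] T)
    (hne : ∀ i, ∃ f : M →ₗ[A] T, f ∘ₗ u i = v i)
    (hdir : ∀ i j, ∃ k, ∀ f : M →ₗ[A] T, f ∘ₗ u k = v k → f ∘ₗ u i = v i ∧ f ∘ₗ u j = v j) :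
    ∃ f : M →ₗ[A] T, ∀ i, f ∘ₗ u i = v i := by
  classical
  -- consistency of a set of "pins"
  let Consistent : Set (M × T) → Prop := fun P =>
    ∀ (i : ι) (Q : Finset (M × T)), ↑Q ⊆ P →
      ∃ f : M →ₗ[A] T, f ∘ₗ u i = v i ∧ ∀ p ∈ Q, f p.1 = p.2
  have hcons_empty : Consistent ∅ := by
    intro i Q hQ
    obtain ⟨f, hf⟩ := hne i
    refine ⟨f, hf, fun p hp => absurd (hQ (Finset.mem_coe.mpr hp)) (by simp)⟩
  obtain ⟨Pm, -, hPmem, hPmax⟩ : ∃ Pm, ∅ ⊆ Pm ∧ Consistent Pm ∧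
      ∀ P', Consistent P' → Pm ⊆ P' → P' ⊆ Pm := by
    obtain ⟨Pm, h1, h2⟩ := zorn_subset_nonempty {P | Consistent P} (fun c hc hchain hcne => by
      refine ⟨⋃₀ c, ?_, fun s hs => Set.subset_sUnion_of_mem hs⟩
      intro i Q hQ
      obtain ⟨P, hPc, hQP⟩ := chain_finset_subset hchain hcne Q hQ
      exact hc hPc i Q hQP) ∅ hcons_empty
    exact ⟨Pm, h1, h2.prop, fun P' hP' hle => h2.le_of_ge hP' hle⟩
  -- every m gets a unique pinned value
  have htotal : ∀ m : M, ∃ s : T, (m, s) ∈ Pm := by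
    intro m
    -- index for the coset family
    set κ := ι × {Q : Finset (M × T) // ↑Q ⊆ Pm} with hκ
    haveI : Nonempty κ := ⟨⟨Classical.arbitrary ι, ⟨∅, by simp⟩⟩⟩
    set Wf : κ → Submodule (Module.End A T) T := fun k =>
      { carrier := {t | ∃ h : M →ₗ[A] T, h ∘ₗ u k.1 = 0 ∧ (∀ p ∈ k.2.1, h p.1 = 0) ∧ h m = t}
        add_mem' := by
          rintro t₁ t₂ ⟨h₁, hu₁, hp₁, hm₁⟩ ⟨h₂, hu₂, hp₂, hm₂⟩
          refine ⟨h₁ + h₂, ?_, ?_, ?_⟩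
          · rw [LinearMap.add_comp, hu₁, hu₂, add_zero]
          · intro p hp; simp [hp₁ p hp, hp₂ p hp]
          · simp [hm₁, hm₂]
        zero_mem' := ⟨0, by simp, by simp, by simp⟩
        smul_mem' := by
          rintro g t ⟨h, hu₁, hp₁, hm₁⟩
          refine ⟨g ∘ₗ h, ?_, ?_, ?_⟩
          · rw [LinearMap.comp_assoc, hu₁, LinearMap.comp_zero]
          · intro p hp; simp [LinearMap.comp_apply, hp₁ p hp]
          · simp [LinearMap.comp_apply, hm₁] } with hWf
    set V : κ → Set T := fun k =>
      {t | ∃ f : M →ₗ[A] T, (f ∘ₗ u k.1 = v k.1 ∧ ∀ p ∈ k.2.1, f p.1 = p.2) ∧ f m = t} with hV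
    have hcoset : ∀ k, ∃ c, V k = {x | x - c ∈ Wf k} := by
      intro k
      obtain ⟨f₀, hf₀u, hf₀p⟩ := hPmem k.1 k.2.1 k.2.2
      refine ⟨f₀ m, ?_⟩
      ext t
      constructor
      · rintro ⟨f, ⟨hfu, hfp⟩, rfl⟩
        refine ⟨f - f₀, ?_, ?_, ?_⟩
        · rw [LinearMap.sub_comp, hfu, hf₀u, sub_self]
        · intro p hp; simp [hfp p hp, hf₀p p hp]
        · simp
      · rintro ⟨h, hu₁, hp₁, hm₁⟩
        refine ⟨f₀ + h, ⟨?_, ?_⟩, ?_⟩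
        · rw [LinearMap.add_comp, hf₀u, hu₁, add_zero]
        · intro p hp; simp [hf₀p p hp, hp₁ p hp]
        · simp only [LinearMap.add_apply, hm₁]; abel
    have hdirV : ∀ k l, ∃ j, V j ⊆ V k ∧ V j ⊆ V l := by
      rintro ⟨i₁, Q₁⟩ ⟨i₂, Q₂⟩
      obtain ⟨k, hk⟩ := hdir i₁ i₂
      refine ⟨⟨k, ⟨Q₁.1 ∪ Q₂.1, by
        intro z hz
        rcases Finset.mem_union.mp (by exact_mod_cast hz) with h | h
        · exact Q₁.2 h
        · exact Q₂.2 h⟩⟩, ?_, ?_⟩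
      · rintro t ⟨f, ⟨hfu, hfp⟩, rfl⟩
        exact ⟨f, ⟨(hk f hfu).1, fun p hp => hfp p (Finset.mem_union_left _ hp)⟩, rfl⟩
      · rintro t ⟨f, ⟨hfu, hfp⟩, rfl⟩
        exact ⟨f, ⟨(hk f hfu).2, fun p hp => hfp p (Finset.mem_union_right _ hp)⟩, rfl⟩
    obtain ⟨s, hs⟩ := coset_directed_nonempty V Wf hcoset hdirV
    refine ⟨s, ?_⟩
    -- (m,s) is consistent with Pm, hence in Pm by maximality
    have hconsIns : Consistent (insert (m, s) Pm) := by
      intro i Q hQ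
      have hQ0 : ↑(Q.erase (m, s)) ⊆ Pm := by
        intro z hz
        have hz' := Finset.mem_coe.mp hz
        have h1 := Finset.mem_of_mem_erase hz'
        have h2 := Finset.ne_of_mem_erase hz'
        rcases hQ (Finset.mem_coe.mpr h1) with h | h
        · exact absurd h h2
        · exact h
      obtain ⟨f, ⟨hfu, hfp⟩, hfm⟩ := hs ⟨i, ⟨Q.erase (m, s), hQ0⟩⟩
      refine ⟨f, hfu, ?_⟩
      intro p hp
      by_cases hpe : p = (m, s)
      · rw [hpe]; exact hfm
      · exact hfp p (Finset.mem_erase.mpr ⟨hpe, hp⟩)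
    exact hPmax _ hconsIns (Set.subset_insert _ _) (Set.mem_insert _ _)
  have hfun : ∀ m s s', (m, s) ∈ Pm → (m, s') ∈ Pm → s = s' := by
    intro m s s' h1 h2
    obtain ⟨f, -, hfp⟩ := hPmem (Classical.arbitrary ι) {(m, s), (m, s')} (by
      intro z hz
      rcases Finset.mem_insert.mp (by exact_mod_cast hz) with h | h
      · rw [h]; exact h1
      · rw [Finset.mem_singleton.mp h]; exact h2)
    have e1 : f m = s := hfp (m, s) (Finset.mem_insert_self _ _)
    have e2 : f m = s' := hfp (m, s') (Finset.mem_insert_of_mem (Finset.mem_singleton_self _))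
    rw [← e1, e2]
  choose F hF using htotal
  -- helper to extract a witness pinning finitely many points
  have hwit : ∀ (Q : Finset (M × T)), ↑Q ⊆ Pm → ∃ f : M →ₗ[A] T,
      f ∘ₗ u (Classical.arbitrary ι) = v (Classical.arbitrary ι) ∧ ∀ p ∈ Q, f p.1 = p.2 :=
    fun Q hQ => hPmem _ Q hQ
  have hFadd : ∀ m m', F (m + m') = F m + F m' := by
    intro m m'
    obtain ⟨f, -, hfp⟩ := hwit {(m, F m), (m', F m'), (m + m', F (m + m'))} (by
      intro z hz
      simp only [Finset.coe_insert, Set.mem_insert_iff, Finset.coe_singleton,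
        Set.mem_singleton_iff] at hz
      rcases hz with rfl | rfl | rfl
      · exact hF m
      · exact hF m'
      · exact hF (m + m'))
    have e1 : f m = F m := hfp (m, F m) (by simp)
    have e2 : f m' = F m' := hfp (m', F m') (by simp)
    have e3 : f (m + m') = F (m + m') := hfp (m + m', F (m + m')) (by simp)
    rw [← e1, ← e2, ← e3, map_add]
  have hFsmul : ∀ (a : A) m, F (a • m) = a • F m := by
    intro a m
    obtain ⟨f, -, hfp⟩ := hwit {(m, F m), (a • m, F (a • m))} (by
      intro z hz
      simp only [Finset.coe_insert, Set.mem_insert_iff, Finset.coe_singleton,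
        Set.mem_singleton_iff] at hz
      rcases hz with rfl | rfl
      · exact hF m
      · exact hF (a • m))
    have e1 : f m = F m := hfp (m, F m) (by simp)
    have e2 : f (a • m) = F (a • m) := hfp (a • m, F (a • m)) (by simp)
    rw [← e1, ← e2, map_smul]
  refine ⟨⟨⟨F, hFadd⟩, hFsmul⟩, ?_⟩
  intro i
  apply LinearMap.ext
  intro z
  obtain ⟨f, hfu, hfp⟩ := hPmem i {(u i z, F (u i z))} (by
    intro w hw
    simp only [Finset.coe_singleton, Set.mem_singleton_iff] at hw
    rw [hw]; exact hF (u i z))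
  have e1 : f (u i z) = F (u i z) := hfp (u i z, F (u i z)) (by simp)
  have e2 : f (u i z) = v i z := by rw [← hfu]; rfl
  show F (u i z) = v i z
  rw [← e1, e2]

end Compactness

section Retracts

variable {A : Type} [Ring A] {M : Type} [AddCommGroup M] [Module A M]

/-- L2: if `S` is a directed union of retracts of `M` (projections landing in `S`),
and `M` has both chain conditions over its endomorphism ring, then `S` has finite
length over its endomorphism ring. -/
lemma finiteLength_of_directed_retracts
    [IsNoetherian (Module.End A M) M] [IsArtinian (Module.End A M) M]
    {ι : Type} [Nonempty ι] (Sf : ι → Submodule A M) (π : ι → (M →ₗ[A] M))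
    (hdir : Directed (· ≤ ·) Sf) (S : Submodule A M) (hS : S = ⨆ j, Sf j)
    (hπ₁ : ∀ i, ∀ x ∈ Sf i, π i x = x)
    (hπS : ∀ i m, π i m ∈ S) :
    IsFiniteLength (Module.End A ↥S) ↥S := by
  classical
  set ES := Module.End A ↥S with hES
  let Φ : Submodule ES ↥S → Submodule (Module.End A M) M := fun U =>
    Submodule.span (Module.End A M) (S.subtype '' (U : Set ↥S))
  have hrec : ∀ (U : Submodule ES ↥S) (x : ↥S), (x : M) ∈ Φ U → x ∈ U := by
    intro U x hx
    obtain ⟨n, c, y, hsum⟩ := Submodule.mem_span_set'.mp hx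
    have hxS : (x : M) ∈ ⨆ j, Sf j := hS ▸ x.2
    obtain ⟨i₀, hi₀⟩ := (Submodule.mem_iSup_of_directed Sf hdir).mp hxS
    -- restrictions of π i₀ ∘ c i to S
    let c' : Fin n → ES := fun i =>
      LinearMap.codRestrict S ((π i₀ ∘ₗ (c i)) ∘ₗ S.subtype) (fun z => hπS i₀ _)
    have hy : ∀ i, ∃ w : ↥S, w ∈ U ∧ (w : M) = ((y i : M)) := by
      intro i
      obtain ⟨w, hw, hweq⟩ := (y i).2
      exact ⟨w, hw, hweq⟩
    choose w hwU hweq using hy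
    have hxw : x = ∑ i, c' i • w i := by
      apply Subtype.ext
      have h1 : ((∑ i, c' i • w i : ↥S) : M) = ∑ i, ((c' i • w i : ↥S) : M) :=
        S.coe_sum _ _
      have h2 : ∀ i, ((c' i • w i : ↥S) : M) = π i₀ ((c i) (y i : M)) := by
        intro i
        show ((c' i (w i) : ↥S) : M) = _
        rw [show c' i (w i) = LinearMap.codRestrict S ((π i₀ ∘ₗ (c i)) ∘ₗ S.subtype)
          (fun z => hπS i₀ _) (w i) from rfl, LinearMap.codRestrict_apply]
        simp only [LinearMap.comp_apply, Submodule.coe_subtype, hweq]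
      rw [h1]
      have h3 : (x : M) = π i₀ (x : M) := (hπ₁ i₀ _ hi₀).symm
      rw [h3, ← hsum, map_sum]
      exact Finset.sum_congr rfl (fun i _ => by
        rw [h2 i]
        rfl)
    rw [hxw]
    exact Submodule.sum_mem _ (fun i _ => Submodule.smul_mem _ _ (hwU i))
  have hiff : ∀ U U' : Submodule ES ↥S, Φ U ≤ Φ U' ↔ U ≤ U' := by
    intro U U'
    constructor
    · intro h z hz
      exact hrec U' z (h (Submodule.subset_span ⟨z, hz, rfl⟩))
    · intro h
      exact Submodule.span_mono (Set.image_mono h)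
  let emb : Submodule ES ↥S ↪o Submodule (Module.End A M) M :=
    OrderEmbedding.ofMapLEIff Φ (fun U U' => hiff U U')
  have hwfLT : WellFoundedLT (Submodule ES ↥S) := by
    refine ⟨RelEmbedding.wellFounded emb.ltEmbedding ?_⟩
    exact (inferInstance : WellFoundedLT (Submodule (Module.End A M) M)).wf
  have hwfGT : WellFoundedGT (Submodule ES ↥S) := by
    refine ⟨RelEmbedding.wellFounded emb.dual.ltEmbedding ?_⟩
    exact (IsNoetherian.wellFoundedGT ‹IsNoetherian (Module.End A M) M›).wf
  exact isFiniteLength_iff_isNoetherian_isArtinian.mpr ⟨isNoetherian_mk hwfGT, hwfLT⟩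

/-- L3: a directed union of retracts is a direct summand; moreover the complement can be
chosen through a point killed by all the projections. -/
lemma exists_isCompl_of_directed_retracts
    [IsNoetherian (Module.End A M) M] [IsArtinian (Module.End A M) M]
    {ι : Type} [Nonempty ι] (Sf : ι → Submodule A M) (π : ι → (M →ₗ[A] M))
    (hdir : Directed (· ≤ ·) Sf) (S : Submodule A M) (hS : S = ⨆ j, Sf j)
    (hπ₁ : ∀ i, ∀ x ∈ Sf i, π i x = x)
    (hπS : ∀ i m, π i m ∈ S)
    (x₀ : M) (hx₀ : ∀ i, π i x₀ = 0) :
    ∃ P : Submodule A M, IsCompl S P ∧ x₀ ∈ P := by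
  classical
  have hSfS : ∀ i, Sf i ≤ S := fun i => hS ▸ le_iSup Sf i
  haveI : IsArtinian (Module.End A ↥S) ↥S :=
    (isFiniteLength_iff_isNoetherian_isArtinian.mp
      (finiteLength_of_directed_retracts Sf π hdir S hS hπ₁ hπS)).2
  -- constraints
  let u : ∀ i : ι, (↥(Sf i) × A) →ₗ[A] M := fun i =>
    LinearMap.coprod ((Sf i).subtype) (LinearMap.toSpanSingleton A M x₀)
  let v : ∀ i : ι, (↥(Sf i) × A) →ₗ[A] ↥S := fun i =>
    LinearMap.coprod (Submodule.inclusion (hSfS i)) 0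
  have key : ∀ (f : M →ₗ[A] ↥S) i, f ∘ₗ u i = v i ↔
      ((∀ x ∈ Sf i, ((f x : M)) = x) ∧ f x₀ = 0) := by
    intro f i
    constructor
    · intro h
      constructor
      · intro x hx
        have := congrArg (fun g => (g (⟨x, hx⟩, 0) : ↥S)) h
        simp only [LinearMap.comp_apply, u, v, LinearMap.coprod_apply,
          LinearMap.toSpanSingleton_apply, Submodule.coe_subtype, zero_smul, add_zero,
          map_zero] at this
        rw [this]
        rfl
      · have := congrArg (fun g => (g (0, (1:A)) : ↥S)) h
        simp only [LinearMap.comp_apply, u, v, LinearMap.coprod_apply,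
          LinearMap.toSpanSingleton_apply, Submodule.coe_subtype, one_smul,
          map_zero, zero_add, add_zero, Submodule.coe_zero, ZeroMemClass.coe_zero] at this
        exact Subtype.ext (by simpa using this)
    · rintro ⟨h1, h2⟩
      apply LinearMap.ext
      rintro ⟨z, a⟩
      have e1 : (f ∘ₗ u i) (z, a) = f (z : M) := by
        simp only [LinearMap.comp_apply, u, LinearMap.coprod_apply,
          LinearMap.toSpanSingleton_apply, Submodule.coe_subtype, map_add,
          LinearMap.map_smul, h2, smul_zero, add_zero]
      have e2 : v i (z, a) = Submodule.inclusion (hSfS i) z := by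
        simp only [v, LinearMap.coprod_apply, LinearMap.zero_apply, add_zero]
      rw [e1, e2]
      apply Subtype.ext
      rw [h1 (z : M) z.2]
      rfl
  obtain ⟨F, hF⟩ : ∃ f : M →ₗ[A] ↥S, ∀ i, f ∘ₗ u i = v i := by
    apply exists_hom_of_directed_constraints u v
    · intro i
      refine ⟨LinearMap.codRestrict S (π i) (hπS i), (key _ i).mpr ⟨?_, ?_⟩⟩
      · intro x hx
        simp [LinearMap.codRestrict_apply, hπ₁ i x hx]
      · exact Subtype.ext (by simp [LinearMap.codRestrict_apply, hx₀ i])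
    · intro i j
      obtain ⟨k, hik, hjk⟩ := hdir i j
      refine ⟨k, fun f hf => ?_⟩
      obtain ⟨h1, h2⟩ := (key f k).mp hf
      exact ⟨(key f i).mpr ⟨fun x hx => h1 x (hik hx), h2⟩,
        (key f j).mpr ⟨fun x hx => h1 x (hjk hx), h2⟩⟩
  set g : M →ₗ[A] M := S.subtype ∘ₗ F with hg
  have hgS : ∀ s ∈ S, g s = s := by
    intro s hs
    obtain ⟨i, hi⟩ := (Submodule.mem_iSup_of_directed Sf hdir).mp (hS ▸ hs)
    exact ((key F i).mp (hF i)).1 s hi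
  have hgmem : ∀ m, g m ∈ S := fun m => (F m).2
  have hgx₀ : g x₀ = 0 := by
    have := ((key F (Classical.arbitrary ι)).mp (hF _)).2
    simp [hg, this]
  refine ⟨LinearMap.ker g, ⟨?_, ?_⟩, ?_⟩
  · rw [disjoint_iff]
    apply (Submodule.eq_bot_iff _).mpr
    intro x hx
    have h1 : g x = x := hgS x (Submodule.mem_inf.mp hx).1
    have h2 : g x = 0 := (Submodule.mem_inf.mp hx).2
    rw [← h1, h2]
  · rw [codisjoint_iff]
    apply Submodule.eq_top_iff'.mpr
    intro m
    apply Submodule.mem_sup.mpr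
    refine ⟨g m, hgmem m, m - g m, ?_, by abel⟩
    have : g (m - g m) = 0 := by
      rw [map_sub, hgS (g m) (hgmem m), sub_self]
    exact this
  · exact hgx₀

end Retracts

/-- Indecomposability, in the exact shape of the target statement. -/
def Indec (A N : Type) [Ring A] [AddCommGroup N] [Module A N] : Prop :=
  ¬ ∃ p q : Submodule A N, p ≠ ⊥ ∧ q ≠ ⊥ ∧ p ⊓ q = ⊥ ∧ p ⊔ q = ⊤

section Indecomposable

variable {A : Type} [Ring A] {M : Type} [AddCommGroup M] [Module A M]

/-- L4: a nonzero module, with both chain conditions over its endomorphism ring,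
has a nonzero indecomposable direct summand. -/
lemma exists_indecomposable_compl
    [IsNoetherian (Module.End A M) M] [IsArtinian (Module.End A M) M]
    (hne : ∃ m : M, m ≠ 0) :
    ∃ K P : Submodule A M, IsCompl K P ∧ P ≠ ⊥ ∧ Indec A ↥P := by
  classical
  obtain ⟨m₀, hm₀⟩ := hne
  haveI : Nontrivial M := ⟨m₀, 0, hm₀⟩
  -- a minimal nonzero End-submodule
  have wf : WellFounded ((· < ·) : Submodule (Module.End A M) M → _ → Prop) :=
    (inferInstance : WellFoundedLT (Submodule (Module.End A M) M)).wf
  obtain ⟨X, hXne, hXmin⟩ := wf.has_min {X : Submodule (Module.End A M) M | X ≠ ⊥}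
    ⟨⊤, top_ne_bot⟩
  obtain ⟨x, hxX, hx0⟩ := (Submodule.ne_bot_iff X).mp hXne
  -- transitivity inside X
  have htrans : ∀ y ∈ X, y ≠ 0 → ∀ w ∈ X, ∃ g : Module.End A M, g y = w := by
    intro y hyX hy0 w hwX
    have hle : Submodule.span (Module.End A M) {y} ≤ X :=
      Submodule.span_le.mpr (Set.singleton_subset_iff.mpr hyX)
    have hnb : Submodule.span (Module.End A M) {y} ≠ ⊥ := by
      intro h
      exact hy0 (by
        have : y ∈ (⊥ : Submodule (Module.End A M) M) := h ▸ Submodule.mem_span_singleton_self y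
        simpa using this)
    have heq : Submodule.span (Module.End A M) {y} = X := by
      rcases lt_or_eq_of_le hle with h | h
      · exact absurd h (hXmin _ hnb)
      · exact h
    obtain ⟨g, hg⟩ := Submodule.mem_span_singleton.mp (heq ▸ hwX)
    exact ⟨g, hg⟩
  -- Zorn on complements avoiding x
  set 𝒦 : Set (Submodule A M) := {K | ∃ P, IsCompl K P ∧ x ∈ P} with h𝒦
  have hbot : (⊥ : Submodule A M) ∈ 𝒦 := ⟨⊤, isCompl_bot_top, Submodule.mem_top⟩
  obtain ⟨Km, -, hKmem, hKmax⟩ : ∃ Km, ⊥ ≤ Km ∧ Km ∈ 𝒦 ∧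
      ∀ K', K' ∈ 𝒦 → Km ≤ K' → K' ≤ Km := by
    obtain ⟨Km, h1, h2⟩ := zorn_le_nonempty₀ 𝒦 (fun c hc hchain y hy => by
      haveI : Nonempty ↥c := ⟨⟨y, hy⟩⟩
      have hproj : ∀ K : ↥c, ∃ P, IsCompl (K : Submodule A M) P ∧ x ∈ P := fun K => hc K.2
      choose P hP hxP using hproj
      set π : ↥c → (M →ₗ[A] M) := fun K =>
        (K : Submodule A M).subtype ∘ₗ
          Submodule.linearProjOfIsCompl (K : Submodule A M) (P K) (hP K) with hπ
      have hdir : Directed (· ≤ ·) (fun K : ↥c => (K : Submodule A M)) :=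
        directedOn_iff_directed.mp hchain.directedOn
      have hmain := exists_isCompl_of_directed_retracts
        (fun K : ↥c => (K : Submodule A M)) π hdir
        (⨆ K : ↥c, (K : Submodule A M)) rfl
        (fun K z hz => by
          have h := congrArg (Subtype.val)
            (Submodule.linearProjOfIsCompl_apply_left (hP K) ⟨z, hz⟩)
          exact h)
        (fun K z => by
          simp only [π, LinearMap.comp_apply]
          exact le_iSup (fun K : ↥c => (K : Submodule A M)) K (Submodule.coe_mem _))
        x
        (fun K => by
          have h : Submodule.linearProjOfIsCompl (K : Submodule A M) (P K) (hP K) x = 0 :=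
            Submodule.linearProjOfIsCompl_apply_right (hP K) ⟨x, hxP K⟩
          show ((K : Submodule A M)).subtype
            (Submodule.linearProjOfIsCompl (K : Submodule A M) (P K) (hP K) x) = 0
          rw [h, map_zero])
      obtain ⟨Pinf, hcomplinf, hxPinf⟩ := hmain
      exact ⟨⨆ K : ↥c, (K : Submodule A M), ⟨Pinf, hcomplinf, hxPinf⟩,
        fun z hz => le_iSup (fun K : ↥c => (K : Submodule A M)) ⟨z, hz⟩⟩) ⊥ hbot
    exact ⟨Km, h1, h2.prop, fun K' hK' hle => h2.le_of_ge hK' hle⟩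
  obtain ⟨Pm, hcompl, hxPm⟩ := hKmem
  refine ⟨Km, Pm, hcompl, ?_, ?_⟩
  · exact (Submodule.ne_bot_iff Pm).mpr ⟨x, hxPm, hx0⟩
  · -- indecomposability of Pm
    rintro ⟨p, q, hp0, hq0, hpq, hsup⟩
    set Q : Submodule A M := p.map Pm.subtype with hQdef
    set R : Submodule A M := q.map Pm.subtype with hRdef
    have hQle : Q ≤ Pm := Submodule.map_subtype_le Pm p
    have hRle : R ≤ Pm := Submodule.map_subtype_le Pm q
    have hQRinf : Q ⊓ R = ⊥ := by
      rw [hQdef, hRdef, ← Submodule.map_inf _ (Submodule.injective_subtype Pm), hpq,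
        Submodule.map_bot]
    have hQRsup : Q ⊔ R = Pm := by
      rw [hQdef, hRdef, ← Submodule.map_sup, hsup, Submodule.map_subtype_top]
    have hKPbot : Km ⊓ Pm = ⊥ := disjoint_iff.mp hcompl.disjoint
    have hKPtop : Km ⊔ Pm = ⊤ := codisjoint_iff.mp hcompl.codisjoint
    have hQ0 : Q ≠ ⊥ := by
      obtain ⟨z, hz, hz0⟩ := (Submodule.ne_bot_iff p).mp hp0
      exact (Submodule.ne_bot_iff Q).mpr ⟨(z : M), Submodule.mem_map_of_mem hz,
        fun h => hz0 (Subtype.ext (by simpa using h))⟩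
    have hR0 : R ≠ ⊥ := by
      obtain ⟨z, hz, hz0⟩ := (Submodule.ne_bot_iff q).mp hq0
      exact (Submodule.ne_bot_iff R).mpr ⟨(z : M), Submodule.mem_map_of_mem hz,
        fun h => hz0 (Subtype.ext (by simpa using h))⟩
    -- decompose x
    have hxQR : x ∈ Q ⊔ R := hQRsup ▸ hxPm
    obtain ⟨qh, hqhQ, rh, hrhR, hqr⟩ := Submodule.mem_sup.mp hxQR
    -- complements for the projections
    have hcomplQ : IsCompl Q (R ⊔ Km) := by
      constructor
      · rw [disjoint_iff]
        apply (Submodule.eq_bot_iff _).mpr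
        intro z hz
        obtain ⟨hzQ, hzRK⟩ := Submodule.mem_inf.mp hz
        obtain ⟨r, hr, k, hk, hrk⟩ := Submodule.mem_sup.mp hzRK
        have hkPm : k ∈ Pm := by
          have : k = z - r := by rw [← hrk]; abel
          rw [this]
          exact Submodule.sub_mem _ (hQle hzQ) (hRle hr)
        have hk0 : k = 0 := by
          have : k ∈ Km ⊓ Pm := Submodule.mem_inf.mpr ⟨hk, hkPm⟩
          rwa [hKPbot, Submodule.mem_bot] at this
        have hzR : z = r := by rw [← hrk, hk0, add_zero]
        have : z ∈ Q ⊓ R := Submodule.mem_inf.mpr ⟨hzQ, hzR ▸ hr⟩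
        rwa [hQRinf, Submodule.mem_bot] at this
      · rw [codisjoint_iff, ← sup_assoc, hQRsup, sup_comm]
        exact hKPtop
    have hcomplR : IsCompl R (Q ⊔ Km) := by
      constructor
      · rw [disjoint_iff]
        apply (Submodule.eq_bot_iff _).mpr
        intro z hz
        obtain ⟨hzR, hzQK⟩ := Submodule.mem_inf.mp hz
        obtain ⟨w, hw, k, hk, hwk⟩ := Submodule.mem_sup.mp hzQK
        have hkPm : k ∈ Pm := by
          have : k = z - w := by rw [← hwk]; abel
          rw [this]
          exact Submodule.sub_mem _ (hRle hzR) (hQle hw)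
        have hk0 : k = 0 := by
          have : k ∈ Km ⊓ Pm := Submodule.mem_inf.mpr ⟨hk, hkPm⟩
          rwa [hKPbot, Submodule.mem_bot] at this
        have hzw : z = w := by rw [← hwk, hk0, add_zero]
        have : z ∈ Q ⊓ R := Submodule.mem_inf.mpr ⟨hzw ▸ hw, hzR⟩
        rwa [hQRinf, Submodule.mem_bot] at this
      · rw [codisjoint_iff, ← sup_assoc, sup_comm R Q, hQRsup, sup_comm]
        exact hKPtop
    set eQ : M →ₗ[A] M := Q.subtype ∘ₗ Submodule.linearProjOfIsCompl Q (R ⊔ Km) hcomplQ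
      with heQ
    set eR : M →ₗ[A] M := R.subtype ∘ₗ Submodule.linearProjOfIsCompl R (Q ⊔ Km) hcomplR
      with heR
    have heQx : eQ x = qh := by
      rw [← hqr, heQ, LinearMap.comp_apply, map_add]
      have h1 : Submodule.linearProjOfIsCompl Q (R ⊔ Km) hcomplQ qh
          = (⟨qh, hqhQ⟩ : ↥Q) :=
        Submodule.linearProjOfIsCompl_apply_left hcomplQ ⟨qh, hqhQ⟩
      have h2 : Submodule.linearProjOfIsCompl Q (R ⊔ Km) hcomplQ rh = 0 :=
        Submodule.linearProjOfIsCompl_apply_right hcomplQ ⟨rh, Submodule.mem_sup_left hrhR⟩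
      rw [h1, h2, add_zero]
      rfl
    have heRx : eR x = rh := by
      rw [← hqr, heR, LinearMap.comp_apply, map_add]
      have h1 : Submodule.linearProjOfIsCompl R (Q ⊔ Km) hcomplR rh
          = (⟨rh, hrhR⟩ : ↥R) :=
        Submodule.linearProjOfIsCompl_apply_left hcomplR ⟨rh, hrhR⟩
      have h2 : Submodule.linearProjOfIsCompl R (Q ⊔ Km) hcomplR qh = 0 :=
        Submodule.linearProjOfIsCompl_apply_right hcomplR ⟨qh, Submodule.mem_sup_left hqhQ⟩
      rw [h1, h2, zero_add]
      rfl
    have hqhX : qh ∈ X := by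
      have : eQ • x ∈ X := X.smul_mem eQ hxX
      rwa [show eQ • x = eQ x from rfl, heQx] at this
    have hrhX : rh ∈ X := by
      have : eR • x ∈ X := X.smul_mem eR hxX
      rwa [show eR • x = eR x from rfl, heRx] at this
    -- the contradiction machine: a strictly bigger member of 𝒦
    have hgrow : ∀ K' : Submodule A M, K' ∈ 𝒦 → Km ≤ K' → K' = Km :=
      fun K' h1 h2 => le_antisymm (hKmax K' h1 h2) h2
    by_cases hrh0 : rh = 0
    · -- x = qh ∈ Q, use (Km ⊔ R, Q)
      have hxQ : x ∈ Q := by rw [← hqr, hrh0, add_zero]; exact hqhQ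
      have hKR : Km ⊔ R ∈ 𝒦 := by
        refine ⟨Q, ⟨?_, ?_⟩, hxQ⟩
        · rw [disjoint_iff]
          apply (Submodule.eq_bot_iff _).mpr
          intro z hz
          obtain ⟨hzKR, hzQ⟩ := Submodule.mem_inf.mp hz
          obtain ⟨k, hk, r, hr, hkr⟩ := Submodule.mem_sup.mp hzKR
          have hkPm : k ∈ Pm := by
            have : k = z - r := by rw [← hkr]; abel
            rw [this]
            exact Submodule.sub_mem _ (hQle hzQ) (hRle hr)
          have hk0 : k = 0 := by
            have : k ∈ Km ⊓ Pm := Submodule.mem_inf.mpr ⟨hk, hkPm⟩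
            rwa [hKPbot, Submodule.mem_bot] at this
          have hzr : z = r := by rw [← hkr, hk0, zero_add]
          have : z ∈ Q ⊓ R := Submodule.mem_inf.mpr ⟨hzQ, hzr ▸ hr⟩
          rwa [hQRinf, Submodule.mem_bot] at this
        · rw [codisjoint_iff, sup_assoc, sup_comm R Q, hQRsup]
          exact hKPtop
      have := hgrow _ hKR le_sup_left
      have hRKm : R ≤ Km := by rw [← this]; exact le_sup_right
      obtain ⟨z, hzR, hz0⟩ := (Submodule.ne_bot_iff R).mp hR0
      have : z ∈ Km ⊓ Pm := Submodule.mem_inf.mpr ⟨hRKm hzR, hRle hzR⟩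
      rw [hKPbot, Submodule.mem_bot] at this
      exact hz0 this
    · -- rotate: find P' ∋ x inside Q ⊔ R with complement Km ⊔ Q
      obtain ⟨g, hg⟩ := htrans rh hrhX hrh0 qh hqhX
      set φ : M →ₗ[A] M := LinearMap.id + eQ ∘ₗ g with hφ
      set P' : Submodule A M := R.map φ with hP'
      have himQ : ∀ z : M, eQ z ∈ Q := fun z => (Submodule.linearProjOfIsCompl Q _ hcomplQ z).2
      have hxP' : x ∈ P' := by
        refine Submodule.mem_map.mpr ⟨rh, hrhR, ?_⟩
        have : φ rh = rh + eQ qh := by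
          simp only [hφ, LinearMap.add_apply, LinearMap.id_apply, LinearMap.comp_apply, hg]
        rw [this]
        have heQqh : eQ qh = qh := by
          rw [heQ, LinearMap.comp_apply,
            show Submodule.linearProjOfIsCompl Q (R ⊔ Km) hcomplQ qh = (⟨qh, hqhQ⟩ : ↥Q)
              from Submodule.linearProjOfIsCompl_apply_left hcomplQ ⟨qh, hqhQ⟩]
          rfl
        rw [heQqh, ← hqr]
        abel
      have hP'le : P' ≤ Q ⊔ R := by
        rintro z hz
        obtain ⟨w, hw, rfl⟩ := Submodule.mem_map.mp hz
        have : φ w = w + eQ (g w) := by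
          simp only [hφ, LinearMap.add_apply, LinearMap.id_apply, LinearMap.comp_apply]
        rw [this]
        exact Submodule.add_mem _ (Submodule.mem_sup_right hw)
          (Submodule.mem_sup_left (himQ (g w)))
      have hQP' : Q ⊔ P' = Q ⊔ R := by
        apply le_antisymm
        · exact sup_le le_sup_left hP'le
        · refine sup_le le_sup_left ?_
          intro z hz
          have hz' : φ z - eQ (g z) = z := by
            simp only [hφ, LinearMap.add_apply, LinearMap.id_apply, LinearMap.comp_apply]
            abel
          rw [← hz']
          exact Submodule.sub_mem _ (Submodule.mem_sup_right (Submodule.mem_map_of_mem hz))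
            (Submodule.mem_sup_left (himQ (g z)))
      have hKQ : Km ⊔ Q ∈ 𝒦 := by
        refine ⟨P', ⟨?_, ?_⟩, hxP'⟩
        · rw [disjoint_iff]
          apply (Submodule.eq_bot_iff _).mpr
          intro z hz
          obtain ⟨hzKQ, hzP'⟩ := Submodule.mem_inf.mp hz
          obtain ⟨w, hwR, hwz⟩ := Submodule.mem_map.mp hzP'
          obtain ⟨k, hk, s, hsQ, hks⟩ := Submodule.mem_sup.mp hzKQ
          have hφw : z = w + eQ (g w) := by
            rw [← hwz]
            simp only [hφ, LinearMap.add_apply, LinearMap.id_apply, LinearMap.comp_apply]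
          have hkPm : k ∈ Pm := by
            have : k = w + eQ (g w) - s := by rw [← hφw, ← hks]; abel
            rw [this]
            exact Submodule.sub_mem _
              (Submodule.add_mem _ (hRle hwR) (hQle (himQ (g w)))) (hQle hsQ)
          have hk0 : k = 0 := by
            have : k ∈ Km ⊓ Pm := Submodule.mem_inf.mpr ⟨hk, hkPm⟩
            rwa [hKPbot, Submodule.mem_bot] at this
          have hwQ : w ∈ Q := by
            have : w = s - eQ (g w) := by
              rw [show s = z - k from by rw [← hks]; abel, hk0, sub_zero, hφw]; abel
            rw [this]
            exact Submodule.sub_mem _ hsQ (himQ (g w))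
          have : w ∈ Q ⊓ R := Submodule.mem_inf.mpr ⟨hwQ, hwR⟩
          rw [hQRinf, Submodule.mem_bot] at this
          rw [← hwz, this, map_zero]
        · rw [codisjoint_iff, sup_assoc, hQP', hQRsup]
          exact hKPtop
      have := hgrow _ hKQ le_sup_left
      have hQKm : Q ≤ Km := by rw [← this]; exact le_sup_right
      obtain ⟨z, hzQ, hz0⟩ := (Submodule.ne_bot_iff Q).mp hQ0
      have : z ∈ Km ⊓ Pm := Submodule.mem_inf.mpr ⟨hQKm hzQ, hQle hzQ⟩
      rw [hKPbot, Submodule.mem_bot] at this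
      exact hz0 this

end Indecomposable

set_option maxHeartbeats 1000000

section Transfer

variable {A : Type} [Ring A]

lemma indec_of_equiv {N₁ N₂ : Type} [AddCommGroup N₁] [AddCommGroup N₂]
    [Module A N₁] [Module A N₂] (e : N₁ ≃ₗ[A] N₂) (h : Indec A N₁) : Indec A N₂ := by
  rintro ⟨p, q, hp, hq, hpq, hsup⟩
  refine h ⟨p.map (e.symm : N₂ →ₗ[A] N₁), q.map (e.symm : N₂ →ₗ[A] N₁), ?_, ?_, ?_, ?_⟩
  · obtain ⟨z, hz, hz0⟩ := (Submodule.ne_bot_iff p).mp hp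
    refine (Submodule.ne_bot_iff _).mpr ⟨e.symm z, Submodule.mem_map_of_mem hz, fun h0 => hz0 ?_⟩
    have := congrArg e h0
    simpa using this
  · obtain ⟨z, hz, hz0⟩ := (Submodule.ne_bot_iff q).mp hq
    refine (Submodule.ne_bot_iff _).mpr ⟨e.symm z, Submodule.mem_map_of_mem hz, fun h0 => hz0 ?_⟩
    have := congrArg e h0
    simpa using this
  · rw [← Submodule.map_inf (e.symm : N₂ →ₗ[A] N₁) e.symm.injective, hpq, Submodule.map_bot]
  · rw [← Submodule.map_sup, hsup, Submodule.map_top]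
    exact LinearEquiv.range (e.symm)

end Transfer

theorem stmt11' (A : Type) [Ring A] (M : Type) [AddCommGroup M] [Module A M]
    (hM : IsFiniteLength (Module.End A M) M) :
    ∃ (ι : Type) (Mi : ι → Submodule A M),
      iSupIndep Mi ∧ (⨆ i, Mi i) = ⊤ ∧
      ∀ i, Mi i ≠ ⊥ ∧
        ¬ ∃ p q : Submodule A (Mi i), p ≠ ⊥ ∧ q ≠ ⊥ ∧ p ⊓ q = ⊥ ∧ p ⊔ q = ⊤ := by
  classical
  obtain ⟨hNoe, hArt⟩ := isFiniteLength_iff_isNoetherian_isArtinian.mp hM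
  haveI := hNoe
  haveI := hArt
  -- Zorn on families of independent indecomposable submodules with split finite subsums
  set Good : Set (Set (Submodule A M)) := {F | (∀ N ∈ F, N ≠ ⊥ ∧ Indec A ↥N) ∧ sSupIndep F ∧
      ∀ G : Finset (Submodule A M), ↑G ⊆ F →
        ∃ K, IsCompl (sSup (↑G : Set (Submodule A M))) K} with hGood
  have hempty : (∅ : Set (Submodule A M)) ∈ Good := by
    refine ⟨fun N hN => absurd hN (Set.notMem_empty N), ?_, ?_⟩
    · intro N hN; exact absurd hN (Set.notMem_empty N)
    · intro G hG
      have hGe : (↑G : Set (Submodule A M)) = ∅ := Set.subset_empty_iff.mp hG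
      exact ⟨⊤, by rw [hGe, sSup_empty]; exact isCompl_bot_top⟩
  obtain ⟨Fm, -, hFm⟩ := zorn_subset_nonempty Good (fun c hc hchain hcne => by
    refine ⟨⋃₀ c, ⟨?_, ?_, ?_⟩, fun s hs => Set.subset_sUnion_of_mem hs⟩
    · rintro N ⟨F, hF, hNF⟩
      obtain ⟨hg1, hg2, hg3⟩ := hc hF
      exact hg1 N hNF
    · intro N hN
      rw [disjoint_iff]
      apply (Submodule.eq_bot_iff _).mpr
      intro m hm
      obtain ⟨hmN, hmS⟩ := Submodule.mem_inf.mp hm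
      rw [sSup_eq_iSup'] at hmS
      obtain ⟨s, hs⟩ := Submodule.mem_iSup_iff_exists_finset.mp hmS
      have hcast : ∀ (X : ↥(⋃₀ c \ {N})), (X : Submodule A M) ∈ ⋃₀ c \ {N} :=
        fun X => X.property
      obtain ⟨F₀, hF₀c, hQF₀⟩ := chain_finset_subset hchain hcne
        (insert N (s.image (fun (X : ↥(⋃₀ c \ {N})) => (X : Submodule A M)))) (by
          intro z hz
          rcases Finset.mem_insert.mp (by exact_mod_cast hz) with rfl | hz'
          · exact hN
          · obtain ⟨X', -, rfl⟩ := Finset.mem_image.mp hz'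
            exact (hcast X').1)
      have hNF₀ : N ∈ F₀ := hQF₀ (Finset.mem_coe.mpr (Finset.mem_insert_self _ _))
      have hle : (⨆ X ∈ s, ((X : ↥(⋃₀ c \ {N})) : Submodule A M)) ≤ sSup (F₀ \ {N}) := by
        refine iSup₂_le fun X hX => le_sSup ?_
        exact ⟨hQF₀ (Finset.mem_coe.mpr (Finset.mem_insert_of_mem
          (Finset.mem_image_of_mem (fun (X : ↥(⋃₀ c \ {N})) => (X : Submodule A M)) hX))),
          (hcast X).2⟩
      obtain ⟨hg1, hg2, hg3⟩ := hc hF₀c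
      exact Submodule.disjoint_def.mp (hg2 hNF₀) m hmN (hle hs)
    · intro G hG
      obtain ⟨F₀, hF₀c, hQF₀⟩ := chain_finset_subset hchain hcne G hG
      obtain ⟨hg1, hg2, hg3⟩ := hc hF₀c
      exact hg3 G hQF₀) ∅ hempty
  obtain ⟨hFm1, hFm2, hFm3⟩ := hFm.prop
  set S : Submodule A M := sSup Fm with hSdef
  -- obtain a complement of S via the splitting lemma
  set idx := {G : Finset (Submodule A M) // ↑G ⊆ Fm} with hidx
  haveI : Nonempty idx := ⟨⟨∅, by simp⟩⟩
  have hKex : ∀ G : idx, ∃ K, IsCompl (sSup (↑G.1 : Set (Submodule A M))) K :=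
    fun G => hFm3 G.1 G.2
  choose KG hKG using hKex
  set Sf : idx → Submodule A M := fun G => sSup (↑G.1 : Set (Submodule A M)) with hSf
  set π : idx → (M →ₗ[A] M) := fun G =>
    (Sf G).subtype ∘ₗ Submodule.linearProjOfIsCompl (Sf G) (KG G) (hKG G) with hπ
  have hdir : Directed (· ≤ ·) Sf := by
    intro G G'
    refine ⟨⟨G.1 ∪ G'.1, by
      intro z hz
      rcases Finset.mem_union.mp (by exact_mod_cast hz) with h | h
      · exact G.2 h
      · exact G'.2 h⟩, ?_, ?_⟩
    · apply sSup_le_sSup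
      intro z hz
      exact_mod_cast Finset.mem_union_left _ (by exact_mod_cast hz)
    · apply sSup_le_sSup
      intro z hz
      exact_mod_cast Finset.mem_union_right _ (by exact_mod_cast hz)
  have hSsup : S = ⨆ G, Sf G := by
    apply le_antisymm
    · apply sSup_le
      intro N hN
      have : N ≤ Sf ⟨{N}, by simpa using hN⟩ := by
        simp only [hSf, Finset.coe_singleton, sSup_singleton]
        exact le_refl N
      exact le_trans this (le_iSup Sf _)
    · exact iSup_le fun G => sSup_le_sSup G.2
  have hπ₁ : ∀ G, ∀ z ∈ Sf G, π G z = z := fun G z hz =>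
    congrArg Subtype.val (Submodule.linearProjOfIsCompl_apply_left (hKG G) ⟨z, hz⟩)
  have hπS : ∀ G m, π G m ∈ S := by
    intro G m
    have h1 : π G m ∈ Sf G := (Submodule.linearProjOfIsCompl (Sf G) (KG G) (hKG G) m).2
    exact (sSup_le_sSup G.2 : Sf G ≤ S) h1
  obtain ⟨C, hcompl, -⟩ := exists_isCompl_of_directed_retracts Sf π hdir S hSsup hπ₁ hπS 0
    (fun G => map_zero _)
  by_cases hC : C = ⊥
  · -- S = ⊤ : done
    have hStop : (⨆ N : ↥Fm, (N : Submodule A M)) = ⊤ := by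
      have := codisjoint_iff.mp hcompl.codisjoint
      rw [hC, sup_bot_eq] at this
      rw [← sSup_eq_iSup']
      exact this
    refine ⟨↥Fm, fun N => (N : Submodule A M), ?_, hStop, ?_⟩
    · exact (sSupIndep_iff Fm).mp hFm2
    · intro N
      exact ⟨(hFm1 N N.2).1, (hFm1 N N.2).2⟩
  · -- otherwise extend the family: contradiction with maximality
    exfalso
    have hSCbot : S ⊓ C = ⊥ := disjoint_iff.mp hcompl.disjoint
    have hSCtop : S ⊔ C = ⊤ := codisjoint_iff.mp hcompl.codisjoint
    have hflC : IsFiniteLength (Module.End A ↥C) ↥C := by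
      have := finiteLength_of_directed_retracts (ι := Unit) (fun _ => C)
        (fun _ => C.subtype ∘ₗ Submodule.linearProjOfIsCompl C S hcompl.symm)
        (fun _ _ => ⟨(), le_refl _, le_refl _⟩) C iSup_const.symm
        (fun _ z hz =>
          congrArg Subtype.val (Submodule.linearProjOfIsCompl_apply_left hcompl.symm ⟨z, hz⟩))
        (fun _ m => (Submodule.linearProjOfIsCompl C S hcompl.symm m).2)
      exact this
    obtain ⟨hNoeC, hArtC⟩ := isFiniteLength_iff_isNoetherian_isArtinian.mp hflC
    haveI := hNoeC
    haveI := hArtC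
    obtain ⟨x, hxC, hx0⟩ := (Submodule.ne_bot_iff C).mp hC
    obtain ⟨K'', P'', hcompl'', hP''ne, hP''indec⟩ :=
      exists_indecomposable_compl (A := A) (M := ↥C)
        ⟨⟨x, hxC⟩, fun h => hx0 (congrArg Subtype.val h)⟩
    set D : Submodule A M := P''.map C.subtype with hD
    set KD : Submodule A M := K''.map C.subtype with hKDdef
    have hDC : D ≤ C := Submodule.map_subtype_le _ _
    have hKDC : KD ≤ C := Submodule.map_subtype_le _ _
    have hDne : D ≠ ⊥ := by
      obtain ⟨z, hz, hz0⟩ := (Submodule.ne_bot_iff P'').mp hP''ne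
      exact (Submodule.ne_bot_iff D).mpr ⟨(z : M), Submodule.mem_map_of_mem hz,
        fun h => hz0 (Subtype.ext (by simpa using h))⟩
    have hDindec : Indec A ↥D :=
      indec_of_equiv (Submodule.equivMapOfInjective C.subtype
        (Submodule.injective_subtype C) P'') hP''indec
    have hDKDinf : D ⊓ KD = ⊥ := by
      rw [hD, hKDdef, ← Submodule.map_inf _ (Submodule.injective_subtype C),
        inf_comm, disjoint_iff.mp hcompl''.disjoint, Submodule.map_bot]
    have hDKDsup : D ⊔ KD = C := by
      rw [hD, hKDdef, ← Submodule.map_sup, sup_comm,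
        codisjoint_iff.mp hcompl''.codisjoint, Submodule.map_subtype_top]
    have hDnotin : D ∉ Fm := by
      intro h
      have h1 : D ≤ S := le_sSup h
      have h2 : D ≤ S ⊓ C := le_inf h1 hDC
      rw [hSCbot, le_bot_iff] at h2
      exact hDne h2
    have hFm' : insert D Fm ∈ Good := by
      refine ⟨?_, ?_, ?_⟩
      · intro N hN
        rcases Set.mem_insert_iff.mp hN with rfl | hN'
        · exact ⟨hDne, hDindec⟩
        · exact hFm1 N hN'
      · intro N hN
        rcases Set.mem_insert_iff.mp hN with rfl | hN'
        · rw [Set.insert_diff_self_of_notMem hDnotin]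
          exact (hcompl.disjoint.symm).mono_left hDC
        · have hND : N ≠ D := fun h => hDnotin (h ▸ hN')
          rw [Set.insert_diff_of_notMem _ (by simpa using hND.symm), sSup_insert]
          rw [disjoint_iff]
          apply (Submodule.eq_bot_iff _).mpr
          intro m hm
          obtain ⟨hmN, hmDY⟩ := Submodule.mem_inf.mp hm
          obtain ⟨d, hd, y, hy, hdy⟩ := Submodule.mem_sup.mp hmDY
          have hyS : y ∈ S := (sSup_le_sSup (Set.diff_subset) : sSup (Fm \ {N}) ≤ S) hy
          have hdS : d ∈ S := by
            have : d = m - y := by rw [← hdy]; abel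
            rw [this]
            exact Submodule.sub_mem _ ((le_sSup hN' : N ≤ S) hmN) hyS
          have hd0 : d = 0 := by
            have : d ∈ S ⊓ C := Submodule.mem_inf.mpr ⟨hdS, hDC hd⟩
            rwa [hSCbot, Submodule.mem_bot] at this
          have hmy : m = y := by rw [← hdy, hd0, zero_add]
          exact Submodule.disjoint_def.mp (hFm2 hN') m hmN (hmy ▸ hy)
      · intro G hG
        by_cases hDG : D ∈ G
        · set G' := G.erase D with hG'def
          have hG' : ↑G' ⊆ Fm := by
            intro z hz
            have hz' := Finset.mem_coe.mp hz
            rcases hG (Finset.mem_coe.mpr (Finset.mem_of_mem_erase hz')) with h | h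
            · exact absurd h (Finset.ne_of_mem_erase hz')
            · exact h
          obtain ⟨K', hK'⟩ := hFm3 G' hG'
          set SG' : Submodule A M := sSup (↑G' : Set (Submodule A M)) with hSG'
          have hGsup : sSup (↑G : Set (Submodule A M)) = D ⊔ SG' := by
            conv_lhs => rw [← Finset.insert_erase hDG]
            rw [Finset.coe_insert, sSup_insert]
          have hSG'S : SG' ≤ S := sSup_le_sSup hG'
          have hSG'K' : SG' ⊓ K' = ⊥ := disjoint_iff.mp hK'.disjoint
          have hSG'K'top : SG' ⊔ K' = ⊤ := codisjoint_iff.mp hK'.codisjoint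
          refine ⟨(S ⊓ K') ⊔ KD, ?_, ?_⟩
          · rw [hGsup, disjoint_iff]
            apply (Submodule.eq_bot_iff _).mpr
            intro m hm
            obtain ⟨hm1, hm2⟩ := Submodule.mem_inf.mp hm
            obtain ⟨d, hd, s1, hs1, hds1⟩ := Submodule.mem_sup.mp hm1
            obtain ⟨s2, hs2, k, hk, hs2k⟩ := Submodule.mem_sup.mp hm2
            have hdk : d - k = s2 - s1 := by
              have e1 : d = m - s1 := by rw [← hds1]; abel
              have e2 : k = m - s2 := by rw [← hs2k]; abel
              rw [e1, e2]; abel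
            have hdkC : d - k ∈ C := Submodule.sub_mem _ (hDC hd) (hKDC hk)
            have hdkS : d - k ∈ S := by
              rw [hdk]
              exact Submodule.sub_mem _ (Submodule.mem_inf.mp hs2).1 (hSG'S hs1)
            have hdk0 : d - k = 0 := by
              have : d - k ∈ S ⊓ C := Submodule.mem_inf.mpr ⟨hdkS, hdkC⟩
              rwa [hSCbot, Submodule.mem_bot] at this
            have hd0 : d = 0 := by
              have hdKD : d ∈ KD := by
                have : d = k := by rw [← sub_eq_zero]; exact hdk0
                rw [this]; exact hk
              have : d ∈ D ⊓ KD := Submodule.mem_inf.mpr ⟨hd, hdKD⟩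
              rwa [hDKDinf, Submodule.mem_bot] at this
            have hms1 : m = s1 := by rw [← hds1, hd0, zero_add]
            have hms2 : m = s2 := by
              have hk0 : k = 0 := (sub_eq_zero.mp hdk0).symm.trans hd0
              rw [← hs2k, hk0, add_zero]
            have : m ∈ SG' ⊓ K' :=
              Submodule.mem_inf.mpr ⟨hms1 ▸ hs1, hms2 ▸ (Submodule.mem_inf.mp hs2).2⟩
            rwa [hSG'K', Submodule.mem_bot] at this
          · rw [hGsup, codisjoint_iff]
            have hSeq : S = SG' ⊔ (K' ⊓ S) := by
              have h := sup_inf_assoc_of_le (y := K') (hSG'S)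
              rw [hSG'K'top, top_inf_eq] at h
              exact h
            have hS' : S ≤ (D ⊔ SG') ⊔ (S ⊓ K' ⊔ KD) := by
              refine le_trans (le_of_eq hSeq) (sup_le ?_ ?_)
              · exact le_sup_of_le_left le_sup_right
              · refine le_sup_of_le_right (le_sup_of_le_left ?_)
                exact le_of_eq (inf_comm K' S)
            have hC' : C ≤ (D ⊔ SG') ⊔ (S ⊓ K' ⊔ KD) := by
              rw [← hDKDsup]
              apply sup_le
              · exact le_sup_of_le_left le_sup_left
              · exact le_sup_of_le_right le_sup_right
            rw [eq_top_iff, ← hSCtop]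
            exact sup_le hS' hC'
        · have hGFm : ↑G ⊆ Fm := by
            intro z hz
            rcases hG hz with h | h
            · exact absurd (h ▸ Finset.mem_coe.mp hz) hDG
            · exact h
          exact hFm3 G hGFm
    have : insert D Fm ⊆ Fm := hFm.le_of_ge hFm' (Set.subset_insert _ _)
    exact hDnotin (this (Set.mem_insert _ _))


/-- Any endofinite `A`-module `M` is the internal direct sum (an independent family of
submodules whose supremum is all of `M`) of a family of nonzero indecomposable
submodules. -/
theorem stmt11 (A : Type) [Ring A] (M : Type) [AddCommGroup M] [Module A M]
    (hM : IsEndofinite A M) :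
    ∃ (ι : Type) (Mi : ι → Submodule A M),
      iSupIndep Mi ∧ (⨆ i, Mi i) = ⊤ ∧
      ∀ i, Mi i ≠ ⊥ ∧
        ¬ ∃ p q : Submodule A (Mi i), p ≠ ⊥ ∧ q ≠ ⊥ ∧ p ⊓ q = ⊥ ∧ p ⊔ q = ⊤ := by
  exact stmt11' A M hM
end

section
/- Let A be a ring and M an endofinite A-module. Then for every index set ι, both the direct product ∏_{i ∈ ι} M (the A-module of functions ι → M with pointwise action) and the direct sum ⊕_{i ∈ ι} M are endofinite A-modules. -/
open Module

section Aux

/-- Transfer finite length through an order embedding of submodule lattices. -/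
lemma finLength_of_orderEmbedding {R S M N : Type*} [Ring R] [Ring S]
    [AddCommGroup M] [Module S M] [AddCommGroup N] [Module R N]
    (e : Submodule R N ↪o Submodule S M) (h : IsFiniteLength S M) :
    IsFiniteLength R N := by
  rw [isFiniteLength_iff_isNoetherian_isArtinian] at h ⊢
  obtain ⟨h1, h2⟩ := h
  rw [isNoetherian_iff] at h1 ⊢
  rw [isArtinian_iff] at h2 ⊢
  exact ⟨Subrelation.wf (fun hr => e.strictMono hr) (InvImage.wf e h1),
    Subrelation.wf (fun hr => e.strictMono hr) (InvImage.wf e h2)⟩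

variable {A M ι : Type*} [Ring A] [AddCommGroup M] [Module A M] [DecidableEq ι] (i₀ : ι)

/-- The submodule of `M` over `End A M` associated to an `End A (ι → M)`-submodule of `ι → M`. -/
def piW (U : Submodule (Module.End A (ι → M)) (ι → M)) : Submodule (Module.End A M) M where
  carrier := {m | (Pi.single i₀ m : ι → M) ∈ U}
  zero_mem' := by simpa using U.zero_mem
  add_mem' {a b} ha hb := by
    simpa [Pi.single_add] using U.add_mem ha hb
  smul_mem' f m hm := by
    have key : (Pi.single i₀ (f • m) : ι → M) =
        (((LinearMap.single A (fun _ : ι => M) i₀).comp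
          (f.comp (LinearMap.proj i₀)) : Module.End A (ι → M))) • (Pi.single i₀ m : ι → M) := by
      simp [Module.End.smul_def]
    rw [Set.mem_setOf_eq, key]
    exact U.smul_mem _ hm

lemma mem_piW {U : Submodule (Module.End A (ι → M)) (ι → M)} {m : M} :
    m ∈ piW i₀ U ↔ (Pi.single i₀ m : ι → M) ∈ U := Iff.rfl

lemma piW_mem_iff (hM : IsNoetherian (Module.End A M) M)
    (U : Submodule (Module.End A (ι → M)) (ι → M)) (x : ι → M) :
    x ∈ U ↔ ∀ j, x j ∈ piW i₀ U := by
  constructor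
  · intro hx j
    rw [mem_piW]
    have : (Pi.single i₀ (x j) : ι → M) =
        (((LinearMap.single A (fun _ : ι => M) i₀).comp (LinearMap.proj j) :
          Module.End A (ι → M))) • x := rfl
    rw [this]
    exact U.smul_mem _ hx
  · intro hx
    obtain ⟨s, hs⟩ := (isNoetherian_def.mp hM) (piW i₀ U)
    have hxj : ∀ j, ∃ c : M → Module.End A M, ∑ w ∈ s, c w • w = x j := by
      intro j
      obtain ⟨f, -, hf⟩ := Submodule.mem_span_finset.mp (hs ▸ hx j)
      exact ⟨f, hf⟩
    choose c hc using hxj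
    have hxsum : x = ∑ w ∈ s,
        (LinearMap.pi (fun j => (c j w).comp (LinearMap.proj i₀)) :
          Module.End A (ι → M)) • (Pi.single i₀ w : ι → M) := by
      funext j
      rw [Finset.sum_apply]
      have : ∀ w ∈ s,
          ((LinearMap.pi (fun j => (c j w).comp (LinearMap.proj i₀)) :
            Module.End A (ι → M)) • (Pi.single i₀ w : ι → M)) j = c j w • w := by
        intro w _
        simp [Module.End.smul_def, Module.End.smul_def (c j w) w]
      rw [Finset.sum_congr rfl this, hc j]
    rw [hxsum]
    refine Submodule.sum_mem _ fun w hw => U.smul_mem _ ?_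
    rw [← mem_piW i₀, ← hs]
    exact Submodule.subset_span hw

/-- The submodule of `M` over `End A M` associated to an `End A (ι →₀ M)`-submodule. -/
def fsW (U : Submodule (Module.End A (ι →₀ M)) (ι →₀ M)) : Submodule (Module.End A M) M where
  carrier := {m | (Finsupp.single i₀ m : ι →₀ M) ∈ U}
  zero_mem' := by simpa using U.zero_mem
  add_mem' {a b} ha hb := by
    simpa [Finsupp.single_add] using U.add_mem ha hb
  smul_mem' f m hm := by
    have key : (Finsupp.single i₀ (f • m) : ι →₀ M) =
        ((Finsupp.lsingle i₀ : M →ₗ[A] ι →₀ M).comp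
          (f.comp (Finsupp.lapply i₀))) • (Finsupp.single i₀ m : ι →₀ M) := by
      simp [Module.End.smul_def]
    rw [Set.mem_setOf_eq, key]
    exact U.smul_mem _ hm

lemma mem_fsW {U : Submodule (Module.End A (ι →₀ M)) (ι →₀ M)} {m : M} :
    m ∈ fsW i₀ U ↔ (Finsupp.single i₀ m : ι →₀ M) ∈ U := Iff.rfl

lemma fsW_mem_iff (U : Submodule (Module.End A (ι →₀ M)) (ι →₀ M)) (x : ι →₀ M) :
    x ∈ U ↔ ∀ j, x j ∈ fsW i₀ U := by
  constructor
  · intro hx j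
    rw [mem_fsW]
    have : (Finsupp.single i₀ (x j) : ι →₀ M) =
        ((Finsupp.lsingle i₀ : M →ₗ[A] ι →₀ M).comp (Finsupp.lapply j)) • x := by
      simp [Module.End.smul_def]
    rw [this]
    exact U.smul_mem _ hx
  · intro hx
    have hxsum : x = ∑ j ∈ x.support, Finsupp.single j (x j) :=
      (Finsupp.sum_single x).symm
    rw [hxsum]
    refine Submodule.sum_mem _ fun j _ => ?_
    have : (Finsupp.single j (x j) : ι →₀ M) =
        ((Finsupp.lsingle j : M →ₗ[A] ι →₀ M).comp (Finsupp.lapply i₀)) •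
          (Finsupp.single i₀ (x j) : ι →₀ M) := by
      simp [Module.End.smul_def]
    rw [this]
    exact U.smul_mem _ (hx j)

end Aux

/-- For an endofinite `A`-module `M` and any index set `ι`, both the direct product
`∏_{i ∈ ι} M = (ι → M)` and the direct sum `⊕_{i ∈ ι} M = (ι →₀ M)` are endofinite. -/
theorem stmt12 (A : Type) [Ring A] (M : Type) [AddCommGroup M] [Module A M]
    (hM : IsEndofinite A M) (ι : Type) :
    IsEndofinite A (ι → M) ∧ IsEndofinite A (ι →₀ M) := by
  classical
  cases isEmpty_or_nonempty ι with
  | inl h =>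
    have h1 : Subsingleton (ι → M) := ⟨fun a b => funext fun i => isEmptyElim i⟩
    have h2 : Subsingleton (ι →₀ M) := ⟨fun a b => Finsupp.ext fun i => isEmptyElim i⟩
    exact ⟨IsFiniteLength.of_subsingleton, IsFiniteLength.of_subsingleton⟩
  | inr h =>
    obtain ⟨i₀⟩ := h
    have hNoeth : IsNoetherian (Module.End A M) M :=
      (isFiniteLength_iff_isNoetherian_isArtinian.mp hM).1
    constructor
    · refine finLength_of_orderEmbedding (OrderEmbedding.ofMapLEIff (piW i₀) ?_) hM
      intro U V
      constructor
      · intro hUV x hx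
        rw [piW_mem_iff i₀ hNoeth] at hx ⊢
        exact fun j => hUV (hx j)
      · intro hUV m hm
        exact hUV hm
    · refine finLength_of_orderEmbedding (OrderEmbedding.ofMapLEIff (fsW i₀) ?_) hM
      intro U V
      constructor
      · intro hUV x hx
        rw [fsW_mem_iff i₀] at hx ⊢
        exact fun j => hUV (hx j)
      · intro hUV m hm
        exact hUV hm
end

section
/- Let A be a ring. If M and N are endofinite A-modules, then M ⊕ N is an endofinite A-module; and any direct summand of an endofinite A-module is endofinite. -/
/-- Chain-condition transfer: if the submodule lattice of `Y` embeds strictly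
monotonically into a partial order that is well-founded in both directions,
then `Y` has finite length. -/
lemma IsFiniteLength.of_strictMono {S Y β : Type*} [Ring S] [AddCommGroup Y] [Module S Y]
    [PartialOrder β] [WellFoundedLT β] [WellFoundedGT β]
    (h : Submodule S Y → β) (hsm : StrictMono h) : IsFiniteLength S Y := by
  rw [isFiniteLength_iff_isNoetherian_isArtinian]
  exact ⟨isNoetherian_mk hsm.wellFoundedGT, hsm.wellFoundedLT⟩

private lemma strictMono_of_mono_inj {α β : Type*} [PartialOrder α] [PartialOrder β]
    {h : α → β} (hmono : Monotone h) (hinj : Function.Injective h) : StrictMono h :=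
  fun _ _ hlt => lt_of_le_of_ne (hmono hlt.le) (fun e => hlt.ne (hinj e))

/-- The class of endofinite `A`-modules is closed under finite direct sums and under
direct summands (a summand being exhibited by a split monomorphism). -/
theorem stmt13 (A : Type) [Ring A] :
    (∀ (M N : Type) [AddCommGroup M] [Module A M] [AddCommGroup N] [Module A N],
      IsEndofinite A M → IsEndofinite A N → IsEndofinite A (M × N)) ∧
    (∀ (M N : Type) [AddCommGroup M] [Module A M] [AddCommGroup N] [Module A N]
      (f : N →ₗ[A] M) (g : M →ₗ[A] N), IsEndofinite A M → g.comp f = LinearMap.id →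
      IsEndofinite A N) := by
  constructor
  · -- direct sums
    intro M N _ _ _ _ hM hN
    obtain ⟨hMn, hMa⟩ := isFiniteLength_iff_isNoetherian_isArtinian.mp hM
    obtain ⟨hNn, hNa⟩ := isFiniteLength_iff_isNoetherian_isArtinian.mp hN
    have : WellFoundedGT (Submodule (Module.End A M) M) := hMn.wellFoundedGT
    have : WellFoundedGT (Submodule (Module.End A N) N) := hNn.wellFoundedGT
    -- build the slice submodules
    let h : Submodule (Module.End A (M × N)) (M × N) →
        Submodule (Module.End A M) M × Submodule (Module.End A N) N := fun U =>
      (⟨⟨⟨{m | (m, (0 : N)) ∈ U}, by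
          intro a b ha hb
          simpa using U.add_mem ha hb⟩, by exact U.zero_mem⟩, by
          intro s m hm
          have := U.smul_mem (LinearMap.prodMap s (0 : Module.End A N)) hm
          simpa [Module.End.smul_def] using this⟩,
       ⟨⟨⟨{n | ((0 : M), n) ∈ U}, by
          intro a b ha hb
          simpa using U.add_mem ha hb⟩, by exact U.zero_mem⟩, by
          intro s n hn
          have := U.smul_mem (LinearMap.prodMap (0 : Module.End A M) s) hn
          simpa [Module.End.smul_def] using this⟩)
    have key : ∀ (U : Submodule (Module.End A (M × N)) (M × N)) (m : M) (n : N),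
        (m, n) ∈ U ↔ (m, (0 : N)) ∈ U ∧ ((0 : M), n) ∈ U := by
      intro U m n
      constructor
      · intro hmn
        constructor
        · have := U.smul_mem (LinearMap.prodMap (LinearMap.id) (0 : Module.End A N)) hmn
          simpa [Module.End.smul_def] using this
        · have := U.smul_mem (LinearMap.prodMap (0 : Module.End A M) (LinearMap.id)) hmn
          simpa [Module.End.smul_def] using this
      · rintro ⟨h1, h2⟩
        have := U.add_mem h1 h2
        simpa using this
    have hinj : Function.Injective h := by
      intro U V hUV
      have h1 : ∀ m : M, ((m, (0 : N)) ∈ U ↔ (m, (0 : N)) ∈ V) := by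
        intro m
        exact ⟨fun hx => (congrArg (fun p => m ∈ p.1) hUV ▸ hx : _),
               fun hx => (congrArg (fun p => m ∈ p.1) hUV.symm ▸ hx : _)⟩
      have h2 : ∀ n : N, (((0 : M), n) ∈ U ↔ ((0 : M), n) ∈ V) := by
        intro n
        exact ⟨fun hx => (congrArg (fun p => n ∈ p.2) hUV ▸ hx : _),
               fun hx => (congrArg (fun p => n ∈ p.2) hUV.symm ▸ hx : _)⟩
      ext ⟨m, n⟩
      rw [key U m n, key V m n, h1 m, h2 n]
    have hmono : Monotone h := by
      intro U V hUV
      exact ⟨fun _ hx => hUV hx, fun _ hx => hUV hx⟩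
    exact IsFiniteLength.of_strictMono h (strictMono_of_mono_inj hmono hinj)
  · -- direct summands
    intro M N _ _ _ _ f g hM hgf
    obtain ⟨hMn, hMa⟩ := isFiniteLength_iff_isNoetherian_isArtinian.mp hM
    have : WellFoundedGT (Submodule (Module.End A M) M) := hMn.wellFoundedGT
    have hgf' : ∀ n : N, g (f n) = n := fun n => congrArg (fun φ => φ n) hgf
    let α : Submodule (Module.End A N) N → Submodule (Module.End A M) M := fun P =>
      Submodule.span (Module.End A M) (⇑f '' (P : Set N))
    -- recovery: g maps α P into P (in a strong, End-stable sense)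
    have hrec : ∀ (P : Submodule (Module.End A N) N) (x : M), x ∈ α P →
        ∀ s : Module.End A M, g (s x) ∈ P := by
      intro P x hx
      refine Submodule.span_induction ?_ ?_ ?_ ?_ hx
      · rintro _ ⟨p, hp, rfl⟩ s
        have : g (s (f p)) = ((g.comp (s.comp f) : Module.End A N)) • p := rfl
        rw [this]
        exact P.smul_mem _ hp
      · intro s; simpa using P.zero_mem
      · intro x y _ _ hx hy s
        have : g (s (x + y)) = g (s x) + g (s y) := by simp
        rw [this]; exact P.add_mem (hx s) (hy s)
      · intro s' x _ hx s
        have : g (s (s' • x)) = g ((s * s') x) := rfl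
        rw [this]; exact hx (s * s')
    have himg : ∀ P : Submodule (Module.End A N) N, ⇑g '' ((α P : Set M)) = (P : Set N) := by
      intro P
      apply Set.Subset.antisymm
      · rintro _ ⟨x, hx, rfl⟩
        have := hrec P x hx 1
        simpa using this
      · intro p hp
        exact ⟨f p, Submodule.subset_span ⟨p, hp, rfl⟩, hgf' p⟩
    have hinj : Function.Injective α := by
      intro P Q hPQ
      apply SetLike.coe_injective
      rw [← himg P, ← himg Q, hPQ]
    have hmono : Monotone α := fun P Q hPQ =>
      Submodule.span_mono (Set.image_mono hPQ)
    exact IsFiniteLength.of_strictMono α (strictMono_of_mono_inj hmono hinj)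
end

section
/- Let k be a field of characteristic p > 0, E a finite p-group, (F, φ) a finite-dimensional k-linear representation of E, and (M, σ) an arbitrary k-linear representation of E. Give Hom_k(F, M) the conjugation E-action (g·f)(x) = σ(g) f(φ(g)⁻¹ x). Then there exists a chain of E-subrepresentations 0 = X_0 ⊆ X_1 ⊆ ⋯ ⊆ X_n = Hom_k(F, M), with n = dim_k F, such that for each i the quotient representation X_{i+1}/X_i is isomorphic to M as a representation of E. -/
open Module Submodule

section Aux

variable {k : Type*} [Field k] {E : Type*} [Group E]

/-- The annihilator of a submodule `N ≤ F` inside `Hom(F, M)`. -/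
private def annih {F M : Type*} [AddCommGroup F] [Module k F]
    [AddCommGroup M] [Module k M] (N : Submodule k F) : Submodule k (F →ₗ[k] M) where
  carrier := {f | ∀ x ∈ N, f x = 0}
  add_mem' := fun hf hg x hx => by simp [hf x hx, hg x hx]
  zero_mem' := fun x _ => rfl
  smul_mem' := fun c f hf x hx => by simp [hf x hx]

private lemma mem_annih {F M : Type*} [AddCommGroup F] [Module k F]
    [AddCommGroup M] [Module k M] {N : Submodule k F} {f : F →ₗ[k] M} :
    f ∈ (annih N : Submodule k (F →ₗ[k] M)) ↔ ∀ x ∈ N, f x = 0 := Iff.rfl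

variable {p : ℕ} [Fact p.Prime] [CharP k p] [Finite E]

/-- Fixed point theorem: a finite `p`-group acting on a nonzero vector space in
characteristic `p` has a nonzero fixed vector. -/
private lemma aux_exists_fixed (hE : IsPGroup p E) {F : Type*} [AddCommGroup F] [Module k F]
    (φ : Representation k E F) {v : F} (hv : v ≠ 0) :
    ∃ w : F, w ≠ 0 ∧ ∀ g : E, φ g w = w := by
  letI : Algebra (ZMod p) k := ZMod.algebra k p
  letI : Module (ZMod p) F := Module.compHom F (algebraMap (ZMod p) k)
  have hsmul : ∀ (c : ZMod p) (x : F), c • x = (algebraMap (ZMod p) k c) • x := fun _ _ => rfl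
  set S : Set F := Set.range (fun g : E => φ g v) with hS
  set W : Submodule (ZMod p) F := Submodule.span (ZMod p) S with hW
  have hvW : v ∈ W := Submodule.subset_span ⟨1, by simp⟩
  have hmaps : ∀ (g : E), ∀ x ∈ W, φ g x ∈ W := by
    intro g x hx
    induction hx using Submodule.span_induction with
    | mem x hx =>
      obtain ⟨h, rfl⟩ := hx
      exact Submodule.subset_span ⟨g * h, by simp [map_mul, Module.End.mul_apply]⟩
    | zero => simp
    | add x y _ _ hx hy => rw [map_add]; exact add_mem hx hy
    | smul c x _ hx => rw [hsmul, map_smul, ← hsmul]; exact Submodule.smul_mem _ _ hx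
  letI : MulAction E W :=
    { smul := fun g w => ⟨φ g w, hmaps g w w.2⟩
      one_smul := fun w => Subtype.ext (by show φ 1 (w : F) = w; simp)
      mul_smul := fun g h w => Subtype.ext (by
        show φ (g * h) (w : F) = φ g (φ h (w : F)); simp [map_mul, Module.End.mul_apply]) }
  have hact : ∀ (g : E) (w : W), ((g • w : W) : F) = φ g w := fun _ _ => rfl
  haveI : FiniteDimensional (ZMod p) W :=
    FiniteDimensional.span_of_finite _ (Set.finite_range _)
  haveI : Finite W := Module.finite_of_finite (ZMod p)
  have hcongr := hE.card_modEq_card_fixedPoints W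
  haveI : Nontrivial W := ⟨⟨⟨v, hvW⟩, 0, by simp [Subtype.ext_iff, hv]⟩⟩
  have hcW : (p : ℕ) ∣ Nat.card W := by
    have := Fintype.ofFinite W
    rw [Nat.card_eq_fintype_card, card_eq_pow_finrank (K := ZMod p) (V := W), ZMod.card]
    exact dvd_pow_self p (Module.finrank_pos (R := ZMod p) (M := W)).ne'
  have hfix : (p : ℕ) ∣ Nat.card (MulAction.fixedPoints E W) :=
    (Nat.modEq_zero_iff_dvd).mp ((hcongr.symm.trans (Nat.modEq_zero_iff_dvd.mpr hcW)))
  have h0 : (0 : W) ∈ MulAction.fixedPoints E W := by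
    intro g; exact Subtype.ext (by show φ g (0 : F) = 0; simp)
  haveI : Finite (MulAction.fixedPoints E W) := Subtype.finite
  have hpos : 0 < Nat.card (MulAction.fixedPoints E W) :=
    Nat.card_pos_iff.mpr ⟨⟨⟨0, h0⟩⟩, inferInstance⟩
  have h2 : 1 < Nat.card (MulAction.fixedPoints E W) := by
    have hp2 := (Fact.out : p.Prime).two_le
    have := Nat.le_of_dvd hpos hfix
    omega
  haveI : Nontrivial (MulAction.fixedPoints E W) :=
    Finite.one_lt_card_iff_nontrivial.mp h2
  obtain ⟨w, hwne⟩ := exists_ne (⟨(0 : W), h0⟩ : MulAction.fixedPoints E W)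
  refine ⟨(w : W), ?_, fun g => ?_⟩
  · intro h
    apply hwne
    ext
    exact h
  · have := w.2 g
    have h' : ((g • (w : W) : W) : F) = ((w : W) : F) := by rw [this]
    rw [hact] at h'
    exact h'


/-- The representation induced on a quotient by an invariant submodule. -/
private def auxQuotRep {F : Type*} [AddCommGroup F] [Module k F]
    (φ : Representation k E F) (L : Submodule k F)
    (hL : ∀ g, ∀ x ∈ L, φ g x ∈ L) : Representation k E (F ⧸ L) where
  toFun g := Submodule.mapQ L L (φ g) (fun x hx => hL g x hx)
  map_one' := Submodule.linearMap_qext _ (by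
    ext x
    simp [Submodule.mapQ_apply])
  map_mul' g h := Submodule.linearMap_qext _ (by
    ext x
    simp [Submodule.mapQ_apply, map_mul, Module.End.mul_apply])

private lemma auxQuotRep_apply {F : Type*} [AddCommGroup F] [Module k F]
    (φ : Representation k E F) (L : Submodule k F)
    (hL : ∀ g, ∀ x ∈ L, φ g x ∈ L) (g : E) (x : F) :
    auxQuotRep φ L hL g (L.mkQ x) = L.mkQ (φ g x) := by
  rw [Submodule.mkQ_apply, Submodule.mkQ_apply]
  exact Submodule.mapQ_apply _ _ (φ g) (h := fun y hy => hL g y hy) x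

/-- Existence of a complete flag with trivial action on the subquotients. -/
private lemma aux_flag (hE : IsPGroup p E) (n : ℕ) (F : Type*) [AddCommGroup F]
    [Module k F] [FiniteDimensional k F] (φ : Representation k E F)
    (hn : Module.finrank k F = n) :
    ∃ G : ℕ → Submodule k F, G 0 = ⊥ ∧ G n = ⊤ ∧
      ∀ i < n, ∃ x, x ∉ G i ∧ G (i + 1) = G i ⊔ Submodule.span k {x} ∧
        ∀ g : E, φ g x - x ∈ G i := by
  induction n generalizing F with
  | zero =>
    refine ⟨fun _ => ⊥, rfl, ?_, fun i hi => absurd hi (Nat.not_lt_zero i)⟩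
    haveI : Subsingleton F := Module.finrank_zero_iff.mp hn
    exact Subsingleton.elim _ _
  | succ n ih =>
    haveI : Nontrivial F := Module.finrank_pos_iff.mp (by rw [hn]; exact n.succ_pos)
    obtain ⟨v, hv⟩ := exists_ne (0 : F)
    obtain ⟨w, hw, hwfix⟩ := aux_exists_fixed hE φ hv
    set L : Submodule k F := Submodule.span k {w} with hL
    have hLinv : ∀ g, ∀ x ∈ L, φ g x ∈ L := by
      intro g x hx
      rw [hL, Submodule.mem_span_singleton] at hx ⊢
      obtain ⟨c, rfl⟩ := hx
      exact ⟨c, by rw [map_smul, hwfix g]⟩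
    set φ' := auxQuotRep φ L hLinv with hφ'
    have hQrank : Module.finrank k (F ⧸ L) = n := by
      have h1 := Submodule.finrank_quotient_add_finrank L
      rw [finrank_span_singleton hw] at h1
      omega
    obtain ⟨G', hG'0, hG'top, hG'step⟩ := ih (F ⧸ L) φ' hQrank
    refine ⟨fun i => Nat.casesOn i ⊥ (fun j => (G' j).comap L.mkQ), rfl, ?_, ?_⟩
    · show (G' n).comap L.mkQ = ⊤
      rw [hG'top, Submodule.comap_top]
    · rintro (_ | i) hi
      · refine ⟨w, by simp [hw], ?_, fun g => by simp [hwfix g]⟩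
        show (G' 0).comap L.mkQ = ⊥ ⊔ Submodule.span k {w}
        rw [hG'0, Submodule.comap_bot, Submodule.ker_mkQ, bot_sup_eq]
      · obtain ⟨xb, hxb, hG'sup, hxbfix⟩ := hG'step i (by omega)
        obtain ⟨x, rfl⟩ := Submodule.mkQ_surjective L xb
        refine ⟨x, ?_, ?_, ?_⟩
        · intro hx
          exact hxb hx
        · show (G' (i + 1)).comap L.mkQ
            = (G' i).comap L.mkQ ⊔ Submodule.span k {x}
          rw [hG'sup]
          apply le_antisymm
          · intro y hy
            rw [Submodule.mem_comap, Submodule.mem_sup] at hy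
            obtain ⟨a, ha, b, hb, hab⟩ := hy
            rw [Submodule.mem_span_singleton] at hb
            obtain ⟨c, rfl⟩ := hb
            rw [Submodule.mem_sup]
            refine ⟨y - c • x, ?_, c • x, Submodule.smul_mem _ _
              (Submodule.mem_span_singleton_self x), by abel⟩
            rw [Submodule.mem_comap, map_sub, map_smul, ← hab]
            simpa using ha
          · refine sup_le (Submodule.comap_mono le_sup_left) ?_
            rw [Submodule.span_le, Set.singleton_subset_iff]
            rw [SetLike.mem_coe, Submodule.mem_comap]
            exact Submodule.mem_sup_right (Submodule.mem_span_singleton_self _)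
        · intro g
          show L.mkQ (φ g x - x) ∈ G' i
          have := hxbfix g
          rw [hφ', auxQuotRep_apply] at this
          rw [map_sub]
          exact this

end Aux

/-- Let `k` be a field of characteristic `p > 0`, `E` a finite `p`-group, `(F, φ)` a
finite-dimensional `k`-linear representation of `E` and `(M, σ)` an arbitrary `k`-linear
representation of `E`. Then `Hom_k(F, M)` with the conjugation action
`(g • f)(x) = σ g (f (φ g⁻¹ x))` has a filtration `0 = X 0 ≤ X 1 ≤ ⋯ ≤ X n = ⊤` by
`E`-subrepresentations, with `n = dim_k F`, whose successive subquotients are all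
isomorphic to `M` as representations of `E`. -/
theorem stmt15 (k : Type*) [Field k] (p : ℕ) [Fact p.Prime] [CharP k p]
    (E : Type*) [Group E] [Finite E] (hE : IsPGroup p E)
    (F M : Type*) [AddCommGroup F] [Module k F] [FiniteDimensional k F]
    [AddCommGroup M] [Module k M]
    (φ : Representation k E F) (σ : Representation k E M) :
    ∃ X : Fin (Module.finrank k F + 1) → Submodule k (F →ₗ[k] M),
      Monotone X ∧ X 0 = ⊥ ∧ X (Fin.last _) = ⊤ ∧
      ∃ hinv : ∀ (i) (g : E), ∀ f ∈ X i, (Representation.linHom φ σ) g f ∈ X i,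
      ∀ i : Fin (Module.finrank k F),
        ∃ e : (X i.succ ⧸ (X i.castSucc).comap (X i.succ).subtype) ≃ₗ[k] M,
          ∀ (g : E) (f : X i.succ),
            e (Submodule.Quotient.mk
                  ⟨(Representation.linHom φ σ) g f.1, hinv i.succ g f.1 f.2⟩)
              = σ g (e (Submodule.Quotient.mk f)) := by
  set n := Module.finrank k F with hn
  obtain ⟨G, hG0, hGtop, hGstep⟩ := aux_flag hE n F φ hn.symm
  have hstep_le : ∀ i < n, G i ≤ G (i + 1) := by
    intro i hi
    obtain ⟨x, -, hsup, -⟩ := hGstep i hi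
    rw [hsup]; exact le_sup_left
  have hmono : ∀ a b, a ≤ b → b ≤ n → G a ≤ G b := by
    intro a b hab
    induction b, hab using Nat.le_induction with
    | base => intro _; exact le_rfl
    | succ b hab ih => intro hb; exact (ih (by omega)).trans (hstep_le b (by omega))
  have hGinv : ∀ i, i ≤ n → ∀ g : E, ∀ x ∈ G i, φ g x ∈ G i := by
    intro i
    induction i with
    | zero =>
      intro _ g x hx
      rw [hG0, Submodule.mem_bot] at hx ⊢
      simp [hx]
    | succ i ih =>
      intro hi g x hx
      obtain ⟨y, -, hsup, hyfix⟩ := hGstep i (by omega)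
      rw [hsup] at hx ⊢
      rw [Submodule.mem_sup] at hx
      obtain ⟨a, ha, b, hb, rfl⟩ := hx
      rw [Submodule.mem_span_singleton] at hb
      obtain ⟨c, rfl⟩ := hb
      rw [map_add, map_smul]
      refine add_mem (Submodule.mem_sup_left (ih (by omega) g a ha)) ?_
      have hy : φ g y = y + (φ g y - y) := by abel
      rw [hy, smul_add]
      exact add_mem
        (Submodule.mem_sup_right (Submodule.smul_mem _ _ (Submodule.mem_span_singleton_self y)))
        (Submodule.mem_sup_left (Submodule.smul_mem _ _ (hyfix g)))
  let X : Fin (n + 1) → Submodule k (F →ₗ[k] M) := fun i => annih (G (n - (i : ℕ)))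
  have hinv : ∀ (i : Fin (n + 1)) (g : E), ∀ f ∈ X i,
      (Representation.linHom φ σ) g f ∈ X i := by
    intro i g f hf
    refine mem_annih.mpr fun x hx => ?_
    rw [Representation.linHom_apply]
    show σ g (f (φ g⁻¹ x)) = 0
    rw [mem_annih.mp hf _ (hGinv _ (Nat.sub_le _ _) g⁻¹ x hx), map_zero]
  refine ⟨X, ?_, ?_, ?_, hinv, ?_⟩
  · intro a b hab
    intro f hf
    refine mem_annih.mpr fun x hx => ?_
    exact mem_annih.mp hf x
      (hmono (n - (b : ℕ)) (n - (a : ℕ)) (by have := Fin.le_def.mp hab; omega) (Nat.sub_le _ _) hx)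
  · refine le_antisymm (fun f hf => ?_) bot_le
    rw [Submodule.mem_bot]
    ext x
    have : x ∈ G (n - ((0 : Fin (n+1)) : ℕ)) := by
      simp only [Fin.val_zero, Nat.sub_zero, hGtop]
      exact Submodule.mem_top
    simpa using mem_annih.mp hf x this
  · refine le_antisymm le_top fun f _ => ?_
    refine mem_annih.mpr fun x hx => ?_
    have : n - ((Fin.last n : Fin (n+1)) : ℕ) = 0 := by simp
    rw [this, hG0, Submodule.mem_bot] at hx
    simp [hx]
  · intro i
    have hiv : (i : ℕ) < n := i.isLt
    obtain ⟨x0, hx0, hGsup, hx0fix⟩ := hGstep (n - ((i : ℕ) + 1)) (by omega)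
    set j := n - ((i : ℕ) + 1) with hjdef
    have hji : n - (i : ℕ) = j + 1 := by omega
    have hXsucc : X i.succ = annih (G j) := by
      show annih (G (n - ((i.succ : Fin (n+1)) : ℕ))) = _
      rw [Fin.val_succ]
    have hXcast : X i.castSucc = annih (G (j + 1)) := by
      show annih (G (n - ((i.castSucc : Fin (n+1)) : ℕ))) = _
      rw [Fin.coe_castSucc, hji]
    have hann : ∀ f : ↥(X i.succ), ∀ x ∈ G j, f.1 x = 0 := by
      intro f x hx
      have h2 : (f : F →ₗ[k] M) ∈ (annih (G j) : Submodule k (F →ₗ[k] M)) := by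
        rw [← hXsucc]; exact f.2
      exact mem_annih.mp h2 x hx
    let ev : ↥(X i.succ) →ₗ[k] M :=
      { toFun := fun f => f.1 x0
        map_add' := fun f g => rfl
        map_smul' := fun c f => rfl }
    have hev : ∀ f : ↥(X i.succ), ev f = f.1 x0 := fun _ => rfl
    have hsurj : Function.Surjective ev := by
      intro m
      have hx0Q : (G j).mkQ x0 ≠ 0 := by
        rw [Ne, Submodule.mkQ_apply, Submodule.Quotient.mk_eq_zero]
        exact hx0
      obtain ⟨r, hr⟩ := (Submodule.span k {(G j).mkQ x0}).subtype.exists_leftInverse_of_injective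
        (Submodule.ker_subtype _)
      set ξ : F →ₗ[k] k :=
        ((LinearEquiv.toSpanNonzeroSingleton k _ ((G j).mkQ x0) hx0Q).symm.toLinearMap
          ∘ₗ r) ∘ₗ (G j).mkQ with hξdef
      have hξ0 : ∀ x ∈ G j, ξ x = 0 := by
        intro x hx
        have hq : (G j).mkQ x = 0 := by
          rw [Submodule.mkQ_apply, Submodule.Quotient.mk_eq_zero]; exact hx
        rw [hξdef]
        simp [LinearMap.comp_apply, hq]
      have hξx0 : ξ x0 = 1 := by
        have h1 : r ((G j).mkQ x0) =
            ⟨(G j).mkQ x0, Submodule.mem_span_singleton_self _⟩ := by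
          have h2 := LinearMap.congr_fun hr
            (⟨(G j).mkQ x0, Submodule.mem_span_singleton_self _⟩ :
              Submodule.span k {(G j).mkQ x0})
          exact h2
        rw [hξdef]
        simp only [LinearMap.comp_apply, h1, LinearEquiv.coe_coe]
        rw [← LinearEquiv.toSpanNonzeroSingleton_one k _ ((G j).mkQ x0) hx0Q,
          LinearEquiv.symm_apply_apply]
      refine ⟨⟨ξ.smulRight m, ?_⟩, ?_⟩
      · rw [hXsucc]
        exact mem_annih.mpr fun x hx => by simp [LinearMap.smulRight_apply, hξ0 x hx]
      · show (ξ.smulRight m) x0 = m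
        simp [LinearMap.smulRight_apply, hξx0]
    have hle : (X i.castSucc).comap (X i.succ).subtype ≤ LinearMap.ker ev := by
      intro f hf
      rw [Submodule.mem_comap, hXcast] at hf
      rw [LinearMap.mem_ker, hev]
      exact mem_annih.mp hf x0
        (by rw [hGsup]; exact Submodule.mem_sup_right (Submodule.mem_span_singleton_self x0))
    have hge : LinearMap.ker ev ≤ (X i.castSucc).comap (X i.succ).subtype := by
      intro f hf
      rw [LinearMap.mem_ker, hev] at hf
      rw [Submodule.mem_comap, hXcast]
      refine mem_annih.mpr fun x hx => ?_
      rw [hGsup, Submodule.mem_sup] at hx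
      obtain ⟨a, ha, b, hb, rfl⟩ := hx
      rw [Submodule.mem_span_singleton] at hb
      obtain ⟨c, rfl⟩ := hb
      show f.1 (a + c • x0) = 0
      rw [map_add, map_smul, hf, smul_zero, add_zero]
      exact hann f a ha
    set q := Submodule.liftQ ((X i.castSucc).comap (X i.succ).subtype) ev hle with hqdef
    have hqbij : Function.Bijective q := by
      constructor
      · rw [← LinearMap.ker_eq_bot, hqdef]
        exact Submodule.ker_liftQ_eq_bot _ _ _ hge
      · intro m
        obtain ⟨f, hf⟩ := hsurj m
        exact ⟨Submodule.Quotient.mk f, by rw [hqdef, Submodule.liftQ_apply]; exact hf⟩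
    refine ⟨LinearEquiv.ofBijective q hqbij, ?_⟩
    intro g f
    have happ : ∀ h : ↥(X i.succ),
        (LinearEquiv.ofBijective q hqbij) (Submodule.Quotient.mk h) = h.1 x0 := by
      intro h
      show q (Submodule.Quotient.mk h) = h.1 x0
      rw [hqdef, Submodule.liftQ_apply]
      exact hev h
    rw [happ, happ]
    show ((Representation.linHom φ σ) g f.1) x0 = σ g (f.1 x0)
    rw [Representation.linHom_apply]
    show σ g (f.1 (φ g⁻¹ x0)) = σ g (f.1 x0)
    congr 1
    have hdiff := hann f _ (hx0fix g⁻¹)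
    rw [map_sub] at hdiff
    exact sub_eq_zero.mp hdiff
end
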